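/- arXiv:2110.02539 — 3 statements merged into one kernel-verified Lean document; each statement's English description precedes it below -/
import Mathlib

section
/- Let n = 2^r m where m is odd and r ≥ 0. Then C_{U(n)^2}(n) ≥ 2^r · 3^{Ω(m)}; that is, there exists a sequence of length 2^r · 3^{Ω(m)} − 1 in Z_n having no nonempty subsequence of consecutive terms which is a U(n)^2-weighted zero-sum sequence. -/
/-- A list `L` over `ZMod n` is an `A`-weighted zero-sum sequence if there are weights
`a₁, …, a_k ∈ A` (one per term) with `a₁x₁ + ⋯ + a_kx_k = 0`. -/
def IsWeightedZeroSum {n : ℕ} (A : Set (ZMod n)) (L : List (ZMod n)) : Prop :=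
  ∃ a : List (ZMod n), a.length = L.length ∧ (∀ w ∈ a, w ∈ A) ∧
    (List.zipWith (· * ·) a L).sum = 0

/-- `L` has a nonempty subsequence of consecutive terms which is an
`A`-weighted zero-sum sequence. -/
def HasConsecWZS {n : ℕ} (A : Set (ZMod n)) (L : List (ZMod n)) : Prop :=
  ∃ l₁ l₂ l₃ : List (ZMod n), L = l₁ ++ l₂ ++ l₃ ∧ l₂ ≠ [] ∧ IsWeightedZeroSum A l₂


open List

def Asq (n : ℕ) : Set (ZMod n) := {x : ZMod n | ∃ u : (ZMod n)ˣ, (u : ZMod n) ^ 2 = x}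

def Avoids (n : ℕ) (L : List (ZMod n)) : Prop :=
  ∀ l₂ : List (ZMod n), l₂ <:+: L → l₂ ≠ [] → ∀ a : List (ZMod n),
    a.length = l₂.length → (∀ w ∈ a, w ∈ Asq n) → (List.zipWith (· * ·) a l₂).sum ≠ 0

def Good (n k : ℕ) : Prop := ∃ L : List (ZMod n), L.length + 1 = k ∧ Avoids n L

lemma one_mem_Asq (n : ℕ) : (1 : ZMod n) ∈ Asq n := ⟨1, by simp⟩

lemma Asq_map {n d : ℕ} (h : d ∣ n) {x : ZMod n} (hx : x ∈ Asq n) :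
    ZMod.castHom h (ZMod d) x ∈ Asq d := by
  obtain ⟨u, rfl⟩ := hx
  refine ⟨Units.map (ZMod.castHom h (ZMod d)).toMonoidHom u, ?_⟩
  rw [Units.coe_map]
  exact (map_pow (ZMod.castHom h (ZMod d)) _ 2).symm

section ziplemmas

variable {R S : Type*} [CommRing R] [CommRing S]

lemma zip_sum_map (φ : R →+* S) (a l : List R) :
    φ (List.zipWith (· * ·) a l).sum = (List.zipWith (· * ·) (a.map φ) (l.map φ)).sum := by
  induction a generalizing l with
  | nil => simp
  | cons w a ih =>
    cases l with
    | nil => simp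
    | cons e l => simp [ih]

lemma zip_sum_zero (a l : List R) (h : ∀ e ∈ l, e = 0) :
    (List.zipWith (· * ·) a l).sum = 0 := by
  induction a generalizing l with
  | nil => simp
  | cons w a ih =>
    cases l with
    | nil => simp
    | cons e l =>
      have he := h e (by simp)
      simp [he, ih l (fun e' he' => h e' (by simp [he']))]

lemma zip_sum_mul_left (c : R) (a l : List R) :
    (List.zipWith (· * ·) a (l.map (c * ·))).sum = c * (List.zipWith (· * ·) a l).sum := by
  induction a generalizing l with
  | nil => simp
  | cons w a ih =>
    cases l with
    | nil => simp
    | cons e l => simp [ih, mul_add]; ring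

end ziplemmas

lemma prefix_append_cases {α : Type*} {l u v : List α} (h : l <+: u ++ v) :
    l <+: u ∨ ∃ t, l = u ++ t ∧ t <+: v := by
  induction u generalizing l with
  | nil => exact Or.inr ⟨l, rfl, h⟩
  | cons c u ih =>
    cases l with
    | nil => exact Or.inl nil_prefix
    | cons d l' =>
      rw [cons_append, cons_prefix_cons] at h
      obtain ⟨rfl, h2⟩ := h
      rcases ih h2 with h3 | ⟨t, rfl, ht⟩
      · exact Or.inl (cons_prefix_cons.2 ⟨rfl, h3⟩)
      · exact Or.inr ⟨t, by simp, ht⟩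

lemma infix_append_cases {α : Type*} {l u v : List α} (h : l <:+: u ++ v) :
    l <:+: u ∨ l <:+: v ∨ ∃ s t, l = s ++ t ∧ s <:+ u ∧ t <+: v := by
  induction u generalizing l with
  | nil => exact Or.inr (Or.inl h)
  | cons c u ih =>
    rw [cons_append, infix_cons_iff] at h
    rcases h with h | h
    · rcases prefix_append_cases (l := l) (u := c :: u) (v := v) (by simpa using h) with
        h | ⟨t, rfl, ht⟩
      · exact Or.inl h.isInfix
      · exact Or.inr (Or.inr ⟨c :: u, t, rfl, suffix_refl _, ht⟩)
    · rcases ih h with h | h | ⟨s, t, rfl, hs, ht⟩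
      · exact Or.inl (infix_cons h)
      · exact Or.inr (Or.inl h)
      · exact Or.inr (Or.inr ⟨s, t, rfl, hs.trans (suffix_cons c u), ht⟩)

lemma infix_map_cases {α β : Type*} {g : α → β} {l : List β} {L : List α}
    (h : l <:+: L.map g) : ∃ l', l' <:+: L ∧ l = l'.map g := by
  obtain ⟨s, t, hst⟩ := h
  have hst' : L.map g = s ++ (l ++ t) := by rw [← hst, append_assoc]
  obtain ⟨s', r, hL, hs', hr⟩ := List.map_eq_append_iff.1 hst'
  obtain ⟨l', t', hr', hl', ht'⟩ := List.map_eq_append_iff.1 hr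
  exact ⟨l', ⟨s', t', by rw [hL, hr', ← append_assoc]⟩, hl'.symm⟩

lemma mul_natCast_eq_zero_iff (n₁ n₂ : ℕ) [NeZero n₁] [NeZero n₂] (S : ZMod (n₁ * n₂)) :
    (n₁ : ZMod (n₁ * n₂)) * S = 0 ↔ ZMod.castHom (dvd_mul_left n₂ n₁) (ZMod n₂) S = 0 := by
  haveI : NeZero (n₁ * n₂) := ⟨Nat.mul_ne_zero (NeZero.ne n₁) (NeZero.ne n₂)⟩
  have hS : ((S.val : ℕ) : ZMod (n₁ * n₂)) = S := by
    rw [ZMod.natCast_val, ZMod.cast_id]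
  have hψ : ZMod.castHom (dvd_mul_left n₂ n₁) (ZMod n₂) S = ((S.val : ℕ) : ZMod n₂) := by
    rw [ZMod.castHom_apply, ← ZMod.natCast_val]
  rw [hψ, ZMod.natCast_eq_zero_iff]
  conv_lhs => rw [← hS]
  rw [← Nat.cast_mul, ZMod.natCast_eq_zero_iff]
  exact Nat.mul_dvd_mul_iff_left (Nat.pos_of_ne_zero (NeZero.ne n₁))

section Product

variable (n₁ n₂ : ℕ)

def fm (x : ZMod n₁) : ZMod (n₁ * n₂) := (x.val : ZMod (n₁ * n₂))

def gm (y : ZMod n₂) : ZMod (n₁ * n₂) := (n₁ : ZMod (n₁ * n₂)) * (y.val : ZMod (n₁ * n₂))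

noncomputable def phi : ZMod (n₁ * n₂) →+* ZMod n₁ := ZMod.castHom (dvd_mul_right n₁ n₂) _

noncomputable def psi : ZMod (n₁ * n₂) →+* ZMod n₂ := ZMod.castHom (dvd_mul_left n₂ n₁) _

def glueL (L₂ : List (ZMod n₂)) (xs : List (ZMod n₁)) : List (ZMod (n₁ * n₂)) :=
  L₂.map (gm n₁ n₂) ++ xs.flatMap (fun x => fm n₁ n₂ x :: L₂.map (gm n₁ n₂))

lemma glueL_cons (L₂ : List (ZMod n₂)) (x : ZMod n₁) (xs : List (ZMod n₁)) :
    glueL n₁ n₂ L₂ (x :: xs) = L₂.map (gm n₁ n₂) ++ (fm n₁ n₂ x :: glueL n₁ n₂ L₂ xs) := by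
  simp [glueL]

variable [NeZero n₁] [NeZero n₂]

lemma phi_fm (x : ZMod n₁) : phi n₁ n₂ (fm n₁ n₂ x) = x := by
  rw [fm, phi, map_natCast, ZMod.natCast_val, ZMod.cast_id]

lemma phi_gm (y : ZMod n₂) : phi n₁ n₂ (gm n₁ n₂ y) = 0 := by
  rw [gm, map_mul, map_natCast, ZMod.natCast_self, zero_mul]

lemma psi_valcast (y : ZMod n₂) : psi n₁ n₂ ((y.val : ℕ) : ZMod (n₁ * n₂)) = y := by
  rw [psi, map_natCast, ZMod.natCast_val, ZMod.cast_id]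

lemma phi_zip_gm (a t : List (ZMod (n₁ * n₂))) (h : ∀ e ∈ t, ∃ y, e = gm n₁ n₂ y) :
    phi n₁ n₂ (List.zipWith (· * ·) a t).sum = 0 := by
  rw [zip_sum_map]
  apply zip_sum_zero
  intro e he
  obtain ⟨e', he', rfl⟩ := List.mem_map.1 he
  obtain ⟨y, rfl⟩ := h e' he'
  exact phi_gm n₁ n₂ y

lemma B_block {L₂ : List (ZMod n₂)} (hL₂ : Avoids n₂ L₂) {l : List (ZMod (n₁ * n₂))}
    (hinf : l <:+: L₂.map (gm n₁ n₂)) (hne : l ≠ []) (a : List (ZMod (n₁ * n₂)))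
    (hlen : a.length = l.length) (hmem : ∀ w ∈ a, w ∈ Asq (n₁ * n₂)) :
    (List.zipWith (· * ·) a l).sum ≠ 0 := by
  obtain ⟨l', hl', rfl⟩ := infix_map_cases hinf
  have hmapeq : l'.map (gm n₁ n₂)
      = (l'.map (fun y => ((y.val : ℕ) : ZMod (n₁ * n₂)))).map
          (fun z => (n₁ : ZMod (n₁ * n₂)) * z) := by
    simp [gm, Function.comp]
  rw [hmapeq, zip_sum_mul_left]
  intro h0
  rw [mul_natCast_eq_zero_iff] at h0
  rw [show ZMod.castHom (dvd_mul_left n₂ n₁) (ZMod n₂) = psi n₁ n₂ from rfl] at h0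
  rw [zip_sum_map] at h0
  have hlm : (l'.map fun y => ((y.val : ℕ) : ZMod (n₁ * n₂))).map (psi n₁ n₂) = l' := by
    rw [List.map_map]
    conv_rhs => rw [← List.map_id l']
    exact List.map_congr_left (fun y _ => psi_valcast n₁ n₂ y)
  rw [hlm] at h0
  exact hL₂ l' hl' (fun h => hne (by simp [h])) (a.map (psi n₁ n₂))
    (by simpa using hlen)
    (fun w hw => by
      obtain ⟨w', hw', rfl⟩ := List.mem_map.1 hw
      exact Asq_map (dvd_mul_left n₂ n₁) (hmem w' hw')) h0

lemma glue_prefix (L₂ : List (ZMod n₂)) (xs : List (ZMod n₁))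
    (t : List (ZMod (n₁ * n₂))) (ht : t <+: glueL n₁ n₂ L₂ xs)
    (a : List (ZMod (n₁ * n₂))) (hlen : a.length = t.length)
    (hmem : ∀ w ∈ a, w ∈ Asq (n₁ * n₂)) :
    ∃ (ys a' : List (ZMod n₁)), ys <+: xs ∧ a'.length = ys.length ∧
      (∀ w ∈ a', w ∈ Asq n₁) ∧
      phi n₁ n₂ (List.zipWith (· * ·) a t).sum = (List.zipWith (· * ·) a' ys).sum := by
  induction xs generalizing t a with
  | nil =>
    refine ⟨[], [], List.nil_prefix, rfl, by simp, ?_⟩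
    rw [phi_zip_gm]
    · simp
    · intro e he
      have ht2 : t <+: L₂.map (gm n₁ n₂) := by simpa [glueL] using ht
      obtain ⟨y, _, rfl⟩ := List.mem_map.1 (ht2.subset he)
      exact ⟨y, rfl⟩
  | cons x xs ih =>
    rw [glueL_cons] at ht
    have hBcase : ∀ t' : List (ZMod (n₁ * n₂)), t' <+: L₂.map (gm n₁ n₂) →
        ∀ a' : List (ZMod (n₁ * n₂)),
        phi n₁ n₂ (List.zipWith (· * ·) a' t').sum = 0 := by
      intro t' ht' a'
      apply phi_zip_gm
      intro e he
      obtain ⟨y, _, rfl⟩ := List.mem_map.1 (ht'.subset he)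
      exact ⟨y, rfl⟩
    rcases prefix_append_cases ht with h | ⟨t', rfl, ht'⟩
    · exact ⟨[], [], List.nil_prefix, rfl, by simp, by rw [hBcase t h a]; simp⟩
    · cases t' with
      | nil =>
        refine ⟨[], [], List.nil_prefix, rfl, by simp, ?_⟩
        rw [List.append_nil, hBcase (L₂.map (gm n₁ n₂)) List.prefix_rfl a]; simp
      | cons e t'' =>
        have he : e = fm n₁ n₂ x ∧ t'' <+: glueL n₁ n₂ L₂ xs := by
          rw [List.cons_prefix_cons] at ht'; exact ht'
        obtain ⟨rfl, ht''⟩ := he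
        -- split the weights
        have hlen' : a.length = (L₂.map (gm n₁ n₂)).length + (t''.length + 1) := by
          simpa using hlen
        set B := L₂.map (gm n₁ n₂) with hB
        have hsplit : a = a.take B.length ++ a.drop B.length := (List.take_append_drop _ _).symm
        have hlen₁ : (a.take B.length).length = B.length := by
          rw [List.length_take]; omega
        have hlen₂ : (a.drop B.length).length = t''.length + 1 := by
          rw [List.length_drop]; omega
        obtain ⟨w, a₃, hwa⟩ : ∃ w a₃, a.drop B.length = w :: a₃ := by
          cases hd : a.drop B.length with
          | nil => rw [hd] at hlen₂; simp at hlen₂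
          | cons w a₃ => exact ⟨w, a₃, rfl⟩
        have ha₃len : a₃.length = t''.length := by
          have := hlen₂; rw [hwa] at this; simpa using this
        obtain ⟨ys, a'', hys, hlen'', hmem'', hsum''⟩ := ih t'' ht'' a₃ ha₃len
          (fun v hv => hmem v (by rw [hsplit, hwa]; simp [hv]))
        refine ⟨x :: ys, phi n₁ n₂ w :: a'', List.cons_prefix_cons.2 ⟨rfl, hys⟩, by
          simp [hlen''], ?_, ?_⟩
        · rintro v hv
          rcases List.mem_cons.1 hv with rfl | hv'
          · exact Asq_map (dvd_mul_right n₁ n₂)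
              (hmem w (by rw [hsplit, hwa]; simp))
          · exact hmem'' v hv'
        · conv_lhs => rw [hsplit, hwa]
          rw [List.zipWith_append hlen₁, List.sum_append, map_add,
            hBcase B List.prefix_rfl (a.take B.length), zero_add,
            List.zipWith_cons_cons, List.sum_cons, map_add, map_mul, phi_fm, hsum'',
            List.zipWith_cons_cons, List.sum_cons]


lemma glueL_length (L₂ : List (ZMod n₂)) (xs : List (ZMod n₁)) :
    (glueL n₁ n₂ L₂ xs).length = L₂.length + xs.length * (L₂.length + 1) := by
  induction xs with
  | nil => simp [glueL]
  | cons c cs ihc =>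
    rw [glueL_cons]
    simp only [List.length_append, List.length_cons, List.length_map, ihc]
    ring

lemma crossing {L₂ : List (ZMod n₂)} (x : ZMod n₁) (xs : List (ZMod n₁))
    (hx : Avoids n₁ (x :: xs)) (s : List (ZMod (n₁ * n₂)))
    (hs : ∀ e ∈ s, ∃ y, e = gm n₁ n₂ y) (t'' : List (ZMod (n₁ * n₂)))
    (ht'' : t'' <+: glueL n₁ n₂ L₂ xs) (a : List (ZMod (n₁ * n₂)))
    (hlen : a.length = (s ++ fm n₁ n₂ x :: t'').length)
    (hmem : ∀ w ∈ a, w ∈ Asq (n₁ * n₂)) :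
    (List.zipWith (· * ·) a (s ++ fm n₁ n₂ x :: t'')).sum ≠ 0 := by
  have hlen' : a.length = s.length + (t''.length + 1) := by simpa using hlen
  have hsplit : a = a.take s.length ++ a.drop s.length := (List.take_append_drop _ _).symm
  have hlen₁ : (a.take s.length).length = s.length := by rw [List.length_take]; omega
  have hlen₂ : (a.drop s.length).length = t''.length + 1 := by rw [List.length_drop]; omega
  obtain ⟨w, a₃, hwa⟩ : ∃ w a₃, a.drop s.length = w :: a₃ := by
    cases hd : a.drop s.length with
    | nil => rw [hd] at hlen₂; simp at hlen₂
    | cons w a₃ => exact ⟨w, a₃, rfl⟩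
  have ha₃len : a₃.length = t''.length := by
    have := hlen₂; rw [hwa] at this; simpa using this
  obtain ⟨ys, a'', hys, hlen'', hmem'', hsum''⟩ := glue_prefix n₁ n₂ L₂ xs t'' ht'' a₃ ha₃len
    (fun v hv => hmem v (by rw [hsplit, hwa]; simp [hv]))
  intro h0
  have hphi : phi n₁ n₂ (List.zipWith (· * ·) a (s ++ fm n₁ n₂ x :: t'')).sum
      = (List.zipWith (· * ·) (phi n₁ n₂ w :: a'') (x :: ys)).sum := by
    conv_lhs => rw [hsplit, hwa]
    rw [List.zipWith_append hlen₁, List.sum_append, map_add,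
      phi_zip_gm n₁ n₂ _ s hs, zero_add, List.zipWith_cons_cons, List.sum_cons, map_add,
      map_mul, phi_fm, hsum'', List.zipWith_cons_cons, List.sum_cons]
  rw [h0, map_zero] at hphi
  exact hx (x :: ys) ((List.cons_prefix_cons.2 ⟨rfl, hys⟩).isInfix) (by simp)
    (phi n₁ n₂ w :: a'') (by simp [hlen''])
    (fun v hv => by
      rcases List.mem_cons.1 hv with rfl | hv'
      · exact Asq_map (dvd_mul_right n₁ n₂) (hmem w (by rw [hsplit, hwa]; simp))
      · exact hmem'' v hv') hphi.symm

lemma glue_avoids {L₂ : List (ZMod n₂)} (hL₂ : Avoids n₂ L₂) :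
    ∀ xs : List (ZMod n₁), Avoids n₁ xs → Avoids (n₁ * n₂) (glueL n₁ n₂ L₂ xs) := by
  intro xs
  induction xs with
  | nil =>
    intro _ l hinf hne a hlena hmema
    have hinf' : l <:+: L₂.map (gm n₁ n₂) := by simpa [glueL] using hinf
    exact B_block n₁ n₂ hL₂ hinf' hne a hlena hmema
  | cons x xs ih =>
    intro hx l hinf hne a hlena hmema
    have hxs : Avoids n₁ xs := fun l2 h2 => hx l2 (List.infix_cons h2)
    rw [glueL_cons] at hinf
    have hgm : ∀ s : List (ZMod (n₁ * n₂)), s <:+: L₂.map (gm n₁ n₂) →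
        ∀ e ∈ s, ∃ y, e = gm n₁ n₂ y := by
      intro s hs e he
      obtain ⟨y, _, rfl⟩ := List.mem_map.1 (hs.subset he)
      exact ⟨y, rfl⟩
    rcases infix_append_cases hinf with h | h | ⟨s, t, rfl, hs, htp⟩
    · exact B_block n₁ n₂ hL₂ h hne a hlena hmema
    · rw [List.infix_cons_iff] at h
      rcases h with hp | hi
      · cases l with
        | nil => exact absurd rfl hne
        | cons e t'' =>
          obtain ⟨rfl, ht''⟩ := List.cons_prefix_cons.1 hp
          exact crossing n₁ n₂ x xs hx [] (by simp) t'' ht'' a hlena hmema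
      · exact ih hxs l hi hne a hlena hmema
    · cases t with
      | nil =>
        rw [List.append_nil] at *
        exact B_block n₁ n₂ hL₂ hs.isInfix hne a hlena hmema
      | cons e t'' =>
        obtain ⟨rfl, ht''⟩ := List.cons_prefix_cons.1 htp
        exact crossing n₁ n₂ x xs hx s (hgm s hs.isInfix) t'' ht'' a hlena hmema

end Product

lemma Good.mul {n₁ n₂ a b : ℕ} (h₁ : n₁ ≠ 0) (h₂ : n₂ ≠ 0)
    (g₁ : Good n₁ a) (g₂ : Good n₂ b) : Good (n₁ * n₂) (a * b) := by
  haveI : NeZero n₁ := ⟨h₁⟩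
  haveI : NeZero n₂ := ⟨h₂⟩
  obtain ⟨L₁, hL₁len, hL₁⟩ := g₁
  obtain ⟨L₂, hL₂len, hL₂⟩ := g₂
  refine ⟨glueL n₁ n₂ L₂ L₁, ?_, glue_avoids n₁ n₂ hL₂ L₁ hL₁⟩
  rw [glueL_length, ← hL₁len, ← hL₂len]
  ring

lemma prefix_pair {α : Type*} {x y : α} {l : List α} (h : l <+: [x, y]) :
    l = [] ∨ l = [x] ∨ l = [x, y] := by
  cases l with
  | nil => exact Or.inl rfl
  | cons c l' =>
    obtain ⟨rfl, h2⟩ := List.cons_prefix_cons.1 h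
    cases l' with
    | nil => exact Or.inr (Or.inl rfl)
    | cons d l'' =>
      obtain ⟨rfl, h3⟩ := List.cons_prefix_cons.1 h2
      exact Or.inr (Or.inr (by rw [List.prefix_nil.1 h3]))

lemma infix_pair {α : Type*} {x y : α} {l : List α} (h : l <:+: [x, y]) :
    l = [] ∨ l = [x] ∨ l = [y] ∨ l = [x, y] := by
  rw [List.infix_cons_iff] at h
  rcases h with h | h
  · rcases prefix_pair h with h | h | h
    · exact Or.inl h
    · exact Or.inr (Or.inl h)
    · exact Or.inr (Or.inr (Or.inr h))
  · rw [List.infix_cons_iff] at h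
    rcases h with h | h
    · cases l with
      | nil => exact Or.inl rfl
      | cons c l' =>
        obtain ⟨rfl, h3⟩ := List.cons_prefix_cons.1 h
        exact Or.inr (Or.inr (Or.inl (by rw [List.prefix_nil.1 h3])))
    · simp only [List.infix_nil] at h
      exact Or.inl h

lemma infix_single {α : Type*} {x : α} {l : List α} (h : l <:+: [x]) :
    l = [] ∨ l = [x] := by
  rw [List.infix_cons_iff] at h
  rcases h with h | h
  · cases l with
    | nil => exact Or.inl rfl
    | cons c l' =>
      obtain ⟨rfl, h3⟩ := List.cons_prefix_cons.1 h
      exact Or.inr (by rw [List.prefix_nil.1 h3])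
  · simp only [List.infix_nil] at h
    exact Or.inl h

lemma good_one : Good 1 1 := by
  refine ⟨[], rfl, ?_⟩
  intro l hinf hne a _ _
  rw [List.infix_nil] at hinf
  exact absurd hinf hne

lemma good_two : Good 2 2 := by
  haveI : Fact (Nat.Prime 2) := ⟨Nat.prime_two⟩
  refine ⟨[1], rfl, ?_⟩
  intro l hinf hne a hlen hmem
  rcases infix_single hinf with rfl | rfl
  · exact absurd rfl hne
  · obtain ⟨w, rfl⟩ := List.length_eq_one_iff.1 (by simpa using hlen)
    obtain ⟨u, rfl⟩ := hmem w (by simp)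
    simpa using pow_ne_zero 2 (Units.ne_zero u)

lemma good_odd_prime {p : ℕ} (hp : p.Prime) (hodd : p ≠ 2) : Good p 3 := by
  haveI : Fact p.Prime := ⟨hp⟩
  have key : ∃ v : ZMod p, v ≠ 0 ∧ ¬ IsSquare (-v) := by
    by_cases hs : IsSquare (-1 : ZMod p)
    · obtain ⟨i, hi⟩ := hs
      obtain ⟨c, hc⟩ := FiniteField.exists_nonsquare
        (F := ZMod p) (by rw [ZMod.ringChar_zmod_n]; exact hodd)
      refine ⟨c, ?_, ?_⟩
      · rintro rfl; exact hc ⟨0, by simp⟩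
      · rintro ⟨z, hz⟩
        apply hc
        refine ⟨i * z, ?_⟩
        have h4 : i * z * (i * z) = (i * i) * (z * z) := by ring
        rw [h4, ← hi, ← hz]
        ring
    · exact ⟨1, one_ne_zero, by simpa using hs⟩
  obtain ⟨v, hv0, hvns⟩ := key
  have hAsq : ∀ w : ZMod p, w ∈ Asq p → w ≠ 0 := by
    rintro w ⟨u, rfl⟩
    exact pow_ne_zero 2 (Units.ne_zero u)
  refine ⟨[1, v], rfl, ?_⟩
  intro l hinf hne a hlen hmem
  rcases infix_pair hinf with rfl | rfl | rfl | rfl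
  · exact absurd rfl hne
  · obtain ⟨w, rfl⟩ := List.length_eq_one_iff.1 (by simpa using hlen)
    simpa using hAsq w (hmem w (by simp))
  · obtain ⟨w, rfl⟩ := List.length_eq_one_iff.1 (by simpa using hlen)
    simpa using mul_ne_zero (hAsq w (hmem w (by simp))) hv0
  · obtain ⟨w₁, w₂, rfl⟩ := List.length_eq_two.1 (by simpa using hlen)
    obtain ⟨u₁, rfl⟩ := hmem w₁ (by simp)
    obtain ⟨u₂, rfl⟩ := hmem w₂ (by simp)
    intro h0
    simp only [List.zipWith_cons_cons, List.zipWith_nil_right, List.sum_cons,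
      List.sum_nil, add_zero, mul_one] at h0
    apply hvns
    refine ⟨(u₁ : ZMod p) * (u₂ : ZMod p)⁻¹, ?_⟩
    have hu₂ : (u₂ : ZMod p) ≠ 0 := Units.ne_zero u₂
    field_simp
    linear_combination -h0

lemma good_pow2 : ∀ r : ℕ, Good (2 ^ r) (2 ^ r) := by
  intro r
  induction r with
  | zero => simpa using good_one
  | succ r ih =>
    rw [pow_succ]
    exact Good.mul (pow_ne_zero r two_ne_zero) two_ne_zero ih good_two

lemma good_odd : ∀ m : ℕ, Odd m → Good m (3 ^ m.primeFactorsList.length) := by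
  intro m
  induction m using Nat.strong_induction_on with
  | _ m ih =>
    intro hm
    have hm0 : m ≠ 0 := by rintro rfl; simp [Nat.odd_iff] at hm
    rcases eq_or_ne m 1 with rfl | hm1
    · simpa [Nat.primeFactorsList_one] using good_one
    · set p := m.minFac with hpdef
      have hp : p.Prime := Nat.minFac_prime hm1
      have hpd : p ∣ m := Nat.minFac_dvd m
      have hp2 : p ≠ 2 := by
        rintro h
        rw [Nat.odd_iff] at hm
        have : (2 : ℕ) ∣ m := h ▸ hpd
        omega
      have hk : m = p * (m / p) := (Nat.mul_div_cancel' hpd).symm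
      have hk0 : m / p ≠ 0 := by
        intro h; rw [h, mul_zero] at hk; exact hm0 hk
      have hklt : m / p < m := Nat.div_lt_self (Nat.pos_of_ne_zero hm0) hp.one_lt
      have hkodd : Odd (m / p) := by
        rcases Nat.even_or_odd (m / p) with he | ho
        · exfalso
          obtain ⟨t, ht⟩ := he
          rw [Nat.odd_iff] at hm
          have : (2 : ℕ) ∣ m := Dvd.dvd.trans ⟨t, by omega⟩ (Nat.div_dvd_of_dvd hpd)
          omega
        · exact ho
      have hΩ : m.primeFactorsList.length = (m / p).primeFactorsList.length + 1 := by
        conv_lhs => rw [hk]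
        rw [(Nat.perm_primeFactorsList_mul hp.ne_zero hk0).length_eq]
        rw [Nat.primeFactorsList_prime hp]
        simp [add_comm]
      rw [hΩ, pow_succ']
      conv_lhs => rw [hk]
      exact Good.mul hp.ne_zero hk0 (good_odd_prime hp hp2) (ih (m / p) hklt hkodd)


/-- For `n = 2^r · m` with `m` odd, `C_{U(n)²}(n) ≥ 2^r · 3^{Ω(m)}`:
there is a sequence of length `2^r · 3^{Ω(m)} - 1` in `Z_n` with no nonempty
consecutive `U(n)²`-weighted zero-sum subsequence. -/
theorem C_squares_lower_bound (r m : ℕ) (hm : Odd m) :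
    ∃ L : List (ZMod (2 ^ r * m)),
      L.length = 2 ^ r * 3 ^ m.primeFactorsList.length - 1 ∧
      ¬ HasConsecWZS
        {x : ZMod (2 ^ r * m) | ∃ u : (ZMod (2 ^ r * m))ˣ, (u : ZMod (2 ^ r * m)) ^ 2 = x}
        L := by
  have hm0 : m ≠ 0 := by rintro rfl; simp [Nat.odd_iff] at hm
  obtain ⟨L, hlen, hav⟩ := Good.mul (pow_ne_zero r two_ne_zero) hm0
    (good_pow2 r) (good_odd m hm)
  refine ⟨L, by omega, ?_⟩
  rintro ⟨l₁, l₂, l₃, hL, hne, ⟨a, halen, hamem, hasum⟩⟩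
  exact hav l₂ ⟨l₁, l₃, hL.symm⟩ hne a halen hamem hasum
end

section
/- Let n be a squarefree natural number not divisible by 2, 7 or 13, with standard decomposition n = n_1 n_2. Then every sequence of length 2^{Ω(n_2)} · 3^{Ω(n_1)} in Z_n has a nonempty subsequence of consecutive terms which is a U(n)^3-weighted zero-sum sequence; that is, C_{U(n)^3}(n) ≤ 2^{Ω(n_2)} · 3^{Ω(n_1)} (and hence, combined with the lower bound, C_{U(n)^3}(n) = 2^{Ω(n_2)} · 3^{Ω(n_1)}). -/
/-- For `n` not divisible by `7`, the factor `n₁` of the standard decomposition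
`n = n₁n₂`: the product of the prime powers `p^{v_p(n)}` over primes `p ∣ n` with
`p ≡ 1 (mod 3)`. The factor `n₂` is then `n / n₁`. -/
def partOne (n : ℕ) : ℕ :=
  ∏ p ∈ n.primeFactors.filter (fun p => p % 3 = 1), p ^ n.factorization p

/-! ### Auxiliary definitions -/

/-- The set of cubes of units in `ZMod n`. -/
def cubesSet (n : ℕ) : Set (ZMod n) := {x : ZMod n | ∃ u : (ZMod n)ˣ, (u : ZMod n) ^ 3 = x}

/-- The local requirement at a prime `p`: `3` if `p ≡ 1 (mod 3)`, else `2`. -/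
def cval (p : ℕ) : ℕ := if p % 3 = 1 then 3 else 2

lemma cval_pos (p : ℕ) : 1 ≤ cval p := by unfold cval; split <;> omega

lemma one_mem_cubesSet (n : ℕ) : (1 : ZMod n) ∈ cubesSet n := ⟨1, by simp⟩

lemma mul_mem_cubesSet {n : ℕ} {x y : ZMod n} (hx : x ∈ cubesSet n) (hy : y ∈ cubesSet n) :
    x * y ∈ cubesSet n := by
  obtain ⟨u, hu⟩ := hx; obtain ⟨v, hv⟩ := hy
  exact ⟨u * v, by rw [Units.val_mul, mul_pow, hu, hv]⟩

/-! ### The combinatorial covering lemma -/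

theorem chunk_count {α : Type*} (P : α → Bool) : ∀ (c M : ℕ) (L : List α),
    L.length = c * M →
    (∀ u w v : List α, L = u ++ w ++ v → w.length = M → 1 ≤ w.countP P) →
    c ≤ L.countP P := by
  intro c
  induction c with
  | zero => intro M L _ _; exact Nat.zero_le _
  | succ c ih =>
    intro M L hL hwin
    have hM : M ≤ L.length := by rw [hL]; nlinarith [Nat.succ_le_succ (Nat.zero_le c)]
    have h1 : 1 ≤ (L.take M).countP P := by
      refine hwin [] (L.take M) (L.drop M) (by simp) ?_
      rw [List.length_take]; omega
    have h2 : c ≤ (L.drop M).countP P := by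
      have hL' : L.length = c * M + M := by rw [hL]; ring
      refine ih M _ (by rw [List.length_drop]; omega) ?_
      intro u w v huwv hw
      refine hwin (L.take M ++ u) w v ?_ hw
      conv_lhs => rw [← List.take_append_drop M L, huwv]
      simp
    calc c + 1 = 1 + c := by omega
    _ ≤ (L.take M).countP P + (L.drop M).countP P := Nat.add_le_add h1 h2
    _ = L.countP P := by rw [← List.countP_append, List.take_append_drop]

theorem comb_cover {α ι : Type*} [DecidableEq ι] (c : ι → ℕ) (P : ι → α → Bool) :
    ∀ (N : ℕ) (I : List ι), I.length = N → (∀ i ∈ I, 1 ≤ c i) →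
    ∀ L : List α, L.length = (I.map c).prod →
    ∃ l₁ l₂ l₃ : List α, L = l₁ ++ l₂ ++ l₃ ∧ l₂ ≠ [] ∧
      ∀ i ∈ I, l₂.countP (P i) = 0 ∨ c i ≤ l₂.countP (P i) := by
  intro N
  induction N using Nat.strong_induction_on with
  | _ N ih =>
    intro I hIN hc L hL
    by_cases hex : ∃ i ∈ I, ∃ u w v : List α, L = u ++ w ++ v ∧
        w.length = ((I.erase i).map c).prod ∧ w.countP (P i) = 0
    · obtain ⟨i, hi, u, w, v, rfl, hwlen, hw0⟩ := hex
      have hNpos : 0 < N := by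
        rw [← hIN]; exact List.length_pos_iff.mpr (List.ne_nil_of_mem hi)
      obtain ⟨w₁, w₂, w₃, hw, hw₂ne, hgood⟩ :=
        ih (N - 1) (by omega) (I.erase i)
          (by rw [List.length_erase_of_mem hi, hIN]) (fun j hj => hc j (List.mem_of_mem_erase hj))
          w hwlen
      refine ⟨u ++ w₁, w₂, w₃ ++ v, by rw [hw]; simp, hw₂ne, ?_⟩
      intro j hj
      by_cases hji : j = i
      · subst hji
        left
        have : w.countP (P j) = w₁.countP (P j) + w₂.countP (P j) + w₃.countP (P j) := by
          rw [hw]; simp [List.countP_append]; omega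
        omega
      · exact hgood j ((List.mem_erase_of_ne hji).mpr hj)
    · push_neg at hex
      refine ⟨[], L, [], by simp, ?_, ?_⟩
      · have : 0 < (I.map c).prod := by
          apply List.prod_pos
          intro a ha
          obtain ⟨j, hj, rfl⟩ := List.mem_map.mp ha
          exact hc j hj
        rw [← List.length_pos_iff, hL]; exact this
      · intro i hi
        right
        refine chunk_count (P i) (c i) (((I.erase i).map c).prod) L ?_ ?_
        · rw [hL]
          have hperm : I.Perm (i :: I.erase i) := List.perm_cons_erase hi
          rw [(hperm.map c).prod_eq]
          simp
        · intro u w v huwv hw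
          have := hex i hi u w v huwv hw
          omega

/-! ### Padding zero entries with weight 1 -/

lemma wzs_pad {n : ℕ} (A : Set (ZMod n)) :
    ∀ (B : List (ZMod n)) (a' : List (ZMod n)),
      a'.length = (B.filter (fun x => x ≠ 0)).length →
      ∃ a : List (ZMod n), a.length = B.length ∧ (∀ w ∈ a, w ∈ a' ∨ w = 1) ∧
        (List.zipWith (· * ·) a B).sum =
          (List.zipWith (· * ·) a' (B.filter (fun x => x ≠ 0))).sum := by
  intro B
  induction B with
  | nil => intro a' _; exact ⟨[], by simp, by simp, by simp⟩
  | cons x B ihB =>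
    intro a' hlen
    by_cases hx : x = 0
    · subst hx
      rw [List.filter_cons_of_neg (by simp)] at hlen ⊢
      obtain ⟨a, ha1, ha2, ha3⟩ := ihB a' hlen
      exact ⟨1 :: a, by simpa using ha1, by
        intro w hw
        rcases List.mem_cons.mp hw with h | h
        · right; exact h
        · exact ha2 w h, by simpa using ha3⟩
    · rw [List.filter_cons_of_pos (by simpa using hx)] at hlen ⊢
      match a', hlen with
      | w :: a'', hlen =>
        obtain ⟨a, ha1, ha2, ha3⟩ := ihB a'' (by simpa using hlen)
        refine ⟨w :: a, by simpa using ha1, ?_, by simpa using ha3⟩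
        intro y hy
        rcases List.mem_cons.mp hy with h | h
        · left; simp [h]
        · rcases ha2 y h with h' | h'
          · left; simp [h']
          · right; exact h'

lemma isWZS_of_filter {n : ℕ} (B : List (ZMod n))
    (h : IsWeightedZeroSum (cubesSet n) (B.filter (fun x => x ≠ 0))) :
    IsWeightedZeroSum (cubesSet n) B := by
  obtain ⟨a', hlen, hmem, hsum⟩ := h
  obtain ⟨a, ha1, ha2, ha3⟩ := wzs_pad (cubesSet n) B a' hlen
  refine ⟨a, ha1, ?_, by rw [ha3, hsum]⟩
  intro w hw
  rcases ha2 w hw with h' | h'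
  · exact hmem w h'
  · rw [h']; exact one_mem_cubesSet n

/-! ### Local solvability at primes -/

-- cube map is surjective on units when `p % 3 ≠ 1`
lemma cube_surj (p : ℕ) [hp : Fact p.Prime] (hp2 : p ≠ 2) (hp3 : p % 3 ≠ 1) {t : ZMod p}
    (ht : t ≠ 0) : t ∈ cubesSet p := by
  have hp' := hp.out
  have hple := hp'.two_le
  obtain ⟨t', rfl⟩ := (isUnit_iff_ne_zero.mpr ht)
  have h3 : ¬ (3 ∣ p - 1) := by
    intro hdvd
    omega
  have hc : Nat.Coprime 3 (p - 1) := (Nat.prime_three.coprime_iff_not_dvd).mpr h3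
  have hlt : 1 < p - 1 := by omega
  obtain ⟨e, -, he⟩ := Nat.exists_mul_mod_eq_one_of_coprime hc hlt
  refine ⟨t' ^ e, ?_⟩
  have hcard : t' ^ (p - 1) = 1 := by
    have := pow_card_eq_one (x := t')
    rwa [ZMod.card_units p] at this
  have key : (t' ^ e) ^ 3 = t' := by
    rw [← pow_mul]
    conv_lhs => rw [← Nat.div_add_mod (e * 3) (p - 1)]
    rw [pow_add, pow_mul, hcard, one_pow, one_mul]
    rw [show e * 3 = 3 * e by ring, he]
    exact pow_one t'
  rw [← Units.val_pow_eq_pow_val, key]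

-- the Jacobi sum estimate: for `p ≡ 1 (mod 3)`, `p ∉ {7, 13}`
section jac
variable (p : ℕ) [hp : Fact p.Prime]

lemma p_ge_19 (hp3 : p % 3 = 1) (hp7 : p ≠ 7) (hp13 : p ≠ 13) : 19 ≤ p := by
  have hp' := hp.out
  have h2 := hp'.two_le
  by_contra hlt
  push_neg at hlt
  interval_cases p <;> first | omega | (revert hp'; norm_num)

lemma chi_cube_vals {χ : MulChar (ZMod p) ℂ} (hχ3 : χ ^ 3 = 1) {t : ZMod p} (ht : t ≠ 0) :
    (χ t) ^ 3 = 1 := by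
  have h1 := DFunLike.congr_fun hχ3 t
  rw [MulChar.pow_apply' χ (by norm_num) t] at h1
  rw [h1, MulChar.one_apply (isUnit_iff_ne_zero.mpr ht)]

lemma chi_ker {χ : MulChar (ZMod p) ℂ} (hχord : orderOf χ = 3) {t : ZMod p}
    (ht : t ≠ 0) (h1 : χ t = 1) : t ∈ cubesSet p := by
  have hχ3 : χ ^ 3 = 1 := by rw [← hχord]; exact pow_orderOf_eq_one χ
  have hχ1 : χ ≠ 1 := by
    intro h; rw [h, orderOf_one] at hχord; norm_num at hχord
  obtain ⟨g, hg⟩ := IsCyclic.exists_generator (α := (ZMod p)ˣ)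
  obtain ⟨tu, rfl⟩ := isUnit_iff_ne_zero.mpr ht
  obtain ⟨k, hk⟩ := hg tu
  have hknat : ∃ k' : ℕ, g ^ k' = tu := by
    refine ⟨(k % ((orderOf g : ℕ) : ℤ)).toNat, ?_⟩
    have hmod : g ^ (k % ((orderOf g : ℕ) : ℤ)) = g ^ k := zpow_mod_orderOf g k
    have hord0 : (0:ℤ) < ((orderOf g : ℕ) : ℤ) := by
      have : 0 < orderOf g := orderOf_pos g
      exact_mod_cast this
    have hnn : 0 ≤ k % ((orderOf g : ℕ) : ℤ) := Int.emod_nonneg k (by omega)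
    simp only at hk
    rw [← hk, ← hmod, ← zpow_natCast, Int.toNat_of_nonneg hnn]
  obtain ⟨k', hk'⟩ := hknat
  set ω := χ ((g : ZMod p)) with hω
  have hω3 : ω ^ 3 = 1 := chi_cube_vals p hχ3 (Units.ne_zero g)
  have hωne : ω ≠ 1 := by
    intro h
    apply hχ1
    rw [MulChar.eq_iff hg χ 1, MulChar.one_apply_coe]
    exact h
  have hωord : orderOf ω = 3 := by
    have hdvd' : orderOf ω ∣ 3 := orderOf_dvd_of_pow_eq_one hω3
    rcases (Nat.prime_three).eq_one_or_self_of_dvd _ hdvd' with h | h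
    · exact absurd (orderOf_eq_one_iff.mp h) hωne
    · exact h
  have hωk : ω ^ k' = 1 := by
    rw [hω, ← map_pow, ← Units.val_pow_eq_pow_val, hk']
    exact h1
  have h3k : 3 ∣ k' := by
    rw [← hωord]
    exact orderOf_dvd_of_pow_eq_one hωk
  obtain ⟨mm, hmm⟩ := h3k
  refine ⟨g ^ mm, ?_⟩
  rw [← Units.val_pow_eq_pow_val, ← pow_mul, show mm * 3 = k' from by omega, hk']

lemma cube_pair_solvable (hp3 : p % 3 = 1) (hp7 : p ≠ 7)
    (hp13 : p ≠ 13) {α β : ZMod p} (hα : α ≠ 0) (hβ : β ≠ 0) :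
    ∃ x y : (ZMod p)ˣ, α * (x : ZMod p) ^ 3 + β * (y : ZMod p) ^ 3 = 1 := by
  have hp' := hp.out
  have hp19 := p_ge_19 p hp3 hp7 hp13
  have hcard : Fintype.card (ZMod p) = p := ZMod.card p
  have hdvd : 3 ∣ Fintype.card (ZMod p) - 1 := by rw [hcard]; omega
  obtain ⟨χ, hχord⟩ := MulChar.exists_mulChar_orderOf (ZMod p) hdvd
    (Complex.isPrimitiveRoot_exp 3 (by norm_num))
  have hχ3 : χ ^ 3 = 1 := by rw [← hχord]; exact pow_orderOf_eq_one χ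
  have hχ1 : χ ≠ 1 := by
    intro h; rw [h, orderOf_one] at hχord; norm_num at hχord
  have hχ2 : χ ^ 2 ≠ 1 := by
    intro h
    have := orderOf_dvd_of_pow_eq_one h
    rw [hχord] at this
    norm_num at this
  -- the auxiliary function detecting cubes
  have hf : ∀ s : ZMod p, (1 : MulChar (ZMod p) ℂ) s + χ s + (χ ^ 2) s ≠ 0 →
      ∃ x : (ZMod p)ˣ, (x : ZMod p) ^ 3 = s := by
    intro s hs
    by_cases h0 : s = 0
    · exfalso
      apply hs
      rw [h0]
      simp [MulChar.map_nonunit _ (by simp : ¬ IsUnit (0 : ZMod p))]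
    by_cases hcube : ∃ x : (ZMod p)ˣ, (x : ZMod p) ^ 3 = s
    · exact hcube
    exfalso
    apply hs
    have hz3 : (χ s) ^ 3 = 1 := chi_cube_vals p hχ3 h0
    have hzne : χ s ≠ 1 := fun h => hcube (chi_ker p hχord h0 h)
    have h2 : (χ ^ 2) s = (χ s) ^ 2 := MulChar.pow_apply' χ (by norm_num) s
    have h1 : (1 : MulChar (ZMod p) ℂ) s = 1 := MulChar.one_apply (isUnit_iff_ne_zero.mpr h0)
    rw [h1, h2]
    have hfac : (χ s - 1) * (1 + χ s + (χ s) ^ 2) = 0 := by linear_combination hz3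
    rcases mul_eq_zero.mp hfac with h | h
    · exact absurd (sub_eq_zero.mp h) hzne
    · exact h
  by_contra hno
  push_neg at hno
  -- the big character sum
  set T : ℂ := ∑ t : ZMod p,
    ((1 : MulChar (ZMod p) ℂ) (α⁻¹ * t) + χ (α⁻¹ * t) + (χ ^ 2) (α⁻¹ * t)) *
    ((1 : MulChar (ZMod p) ℂ) (β⁻¹ * (1 - t)) + χ (β⁻¹ * (1 - t)) + (χ ^ 2) (β⁻¹ * (1 - t)))
    with hT
  have hT0 : T = 0 := by
    rw [hT]
    apply Finset.sum_eq_zero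
    intro t _
    by_contra hprod
    obtain ⟨hf1, hf2⟩ := mul_ne_zero_iff.mp hprod
    obtain ⟨x, hx⟩ := hf _ hf1
    obtain ⟨y, hy⟩ := hf _ hf2
    apply hno x y
    rw [hx, hy]
    field_simp
    ring
  -- expansion into Jacobi sums
  have key : ∀ (φ ψ : MulChar (ZMod p) ℂ),
      ∑ t : ZMod p, φ α⁻¹ * ψ β⁻¹ * (φ t * ψ (1 - t)) = φ α⁻¹ * ψ β⁻¹ * jacobiSum φ ψ := by
    intro φ ψ
    rw [← Finset.mul_sum]
    rfl
  set e0 : MulChar (ZMod p) ℂ := 1 with he0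
  have hTexp : T =
      e0 α⁻¹ * e0 β⁻¹ * jacobiSum e0 e0 + e0 α⁻¹ * χ β⁻¹ * jacobiSum e0 χ
      + e0 α⁻¹ * (χ ^ 2) β⁻¹ * jacobiSum e0 (χ ^ 2)
      + χ α⁻¹ * e0 β⁻¹ * jacobiSum χ e0 + χ α⁻¹ * χ β⁻¹ * jacobiSum χ χ
      + χ α⁻¹ * (χ ^ 2) β⁻¹ * jacobiSum χ (χ ^ 2)
      + (χ ^ 2) α⁻¹ * e0 β⁻¹ * jacobiSum (χ ^ 2) e0
      + (χ ^ 2) α⁻¹ * χ β⁻¹ * jacobiSum (χ ^ 2) χ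
      + (χ ^ 2) α⁻¹ * (χ ^ 2) β⁻¹ * jacobiSum (χ ^ 2) (χ ^ 2) := by
    rw [hT]
    rw [← key e0 e0, ← key e0 χ, ← key e0 (χ ^ 2), ← key χ e0, ← key χ χ, ← key χ (χ ^ 2),
      ← key (χ ^ 2) e0, ← key (χ ^ 2) χ, ← key (χ ^ 2) (χ ^ 2)]
    rw [← Finset.sum_add_distrib, ← Finset.sum_add_distrib, ← Finset.sum_add_distrib,
      ← Finset.sum_add_distrib, ← Finset.sum_add_distrib, ← Finset.sum_add_distrib,
      ← Finset.sum_add_distrib, ← Finset.sum_add_distrib]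
    apply Finset.sum_congr rfl
    intro t _
    simp only [map_mul]
    ring
  -- evaluate the Jacobi sums
  have hone : ∀ s : ZMod p, s ≠ 0 → e0 s = 1 := fun s hs =>
    MulChar.one_apply (isUnit_iff_ne_zero.mpr hs)
  have hαi : α⁻¹ ≠ 0 := inv_ne_zero hα
  have hβi : β⁻¹ ≠ 0 := inv_ne_zero hβ
  have hJ00 : jacobiSum e0 e0 = (p : ℂ) - 2 := by
    rw [he0, jacobiSum_one_one, hcard]
  have hχ2inv : χ ^ 2 = χ⁻¹ := by
    apply eq_inv_of_mul_eq_one_left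
    rw [← pow_succ]
    exact hχ3
  have hχm1 : χ (-1) = 1 := by
    have hm0 : (-1 : ZMod p) ≠ 0 := by
      intro h; rw [neg_eq_zero] at h; exact one_ne_zero h
    have h3 : (χ (-1)) ^ 3 = 1 := chi_cube_vals p hχ3 hm0
    have h2 : (χ (-1)) ^ 2 = 1 := by rw [← map_pow, neg_one_sq, map_one]
    linear_combination h3 - χ (-1) * h2
  have hJ01 : jacobiSum e0 χ = -1 := jacobiSum_one_nontrivial hχ1
  have hJ02 : jacobiSum e0 (χ ^ 2) = -1 := jacobiSum_one_nontrivial hχ2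
  have hJ10 : jacobiSum χ e0 = -1 := by rw [jacobiSum_comm]; exact hJ01
  have hJ20 : jacobiSum (χ ^ 2) e0 = -1 := by rw [jacobiSum_comm]; exact hJ02
  have hJ12 : jacobiSum χ (χ ^ 2) = -1 := by
    rw [hχ2inv, jacobiSum_nontrivial_inv hχ1, hχm1]
  have hJ21 : jacobiSum (χ ^ 2) χ = -1 := by rw [jacobiSum_comm]; exact hJ12
  -- norms of the two surviving Jacobi sums
  have hchar : ringChar ℂ ≠ ringChar (ZMod p) := by
    rw [ringChar.eq_zero, ZMod.ringChar_zmod_n]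
    exact fun h => hp'.ne_zero h.symm
  have hχχ : χ * χ ≠ 1 := by rw [← pow_two]; exact hχ2
  have hmulJ : jacobiSum χ χ * jacobiSum χ⁻¹ χ⁻¹ = (p : ℂ) := by
    rw [jacobiSum_mul_jacobiSum_inv hchar hχ1 hχ1 hχχ, hcard]
  have hconj : (starRingEnd ℂ) (jacobiSum χ χ) = jacobiSum χ⁻¹ χ⁻¹ := by
    rw [← MulChar.star_eq_inv χ]
    exact (jacobiSum_ringHomComp χ χ (starRingEnd ℂ)).symm
  have habsJ : ‖jacobiSum χ χ‖ = Real.sqrt p := by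
    have h1 : (Complex.normSq (jacobiSum χ χ) : ℂ) = (p : ℂ) := by
      rw [← Complex.mul_conj, hconj, hmulJ]
    have h2 : Complex.normSq (jacobiSum χ χ) = (p : ℝ) := by exact_mod_cast h1
    rw [Complex.norm_def, h2]
  have habsJ2 : ‖jacobiSum (χ ^ 2) (χ ^ 2)‖ = Real.sqrt p := by
    rw [hχ2inv, ← hconj, Complex.norm_conj, habsJ]
  -- values of characters at units have absolute value 1
  have habs1 : ∀ s : ZMod p, s ≠ 0 → ‖χ s‖ = 1 := by
    intro s hs
    have h3 : (‖χ s‖) ^ 3 = 1 := by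
      rw [← norm_pow, chi_cube_vals p hχ3 hs, norm_one]
    nlinarith [norm_nonneg (χ s), sq_nonneg (‖χ s‖ - 1),
      sq_nonneg (‖χ s‖ + 1)]
  have habs2 : ∀ s : ZMod p, s ≠ 0 → ‖(χ ^ 2) s‖ = 1 := by
    intro s hs
    rw [MulChar.pow_apply' χ (by norm_num) s, norm_pow, habs1 s hs, one_pow]
  -- assemble the estimate
  rw [hT0] at hTexp
  rw [hone _ hαi, hone _ hβi, hJ00, hJ01, hJ02, hJ10, hJ20, hJ12, hJ21] at hTexp
  have heq : (p : ℂ) - 2 =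
      χ β⁻¹ + (χ ^ 2) β⁻¹ + χ α⁻¹ + (χ ^ 2) α⁻¹ + χ α⁻¹ * (χ ^ 2) β⁻¹
      + (χ ^ 2) α⁻¹ * χ β⁻¹ - χ α⁻¹ * χ β⁻¹ * jacobiSum χ χ
      - (χ ^ 2) α⁻¹ * (χ ^ 2) β⁻¹ * jacobiSum (χ ^ 2) (χ ^ 2) := by
    linear_combination -hTexp
  have hsub : ∀ x y : ℂ, ‖x - y‖ ≤ ‖x‖ + ‖y‖ := by
    intro x y
    rw [sub_eq_add_neg]
    refine (norm_add_le x (-y)).trans ?_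
    simp
  have hA : ‖χ β⁻¹ + (χ ^ 2) β⁻¹ + χ α⁻¹ + (χ ^ 2) α⁻¹ + χ α⁻¹ * (χ ^ 2) β⁻¹
      + (χ ^ 2) α⁻¹ * χ β⁻¹‖ ≤ 6 := by
    calc ‖χ β⁻¹ + (χ ^ 2) β⁻¹ + χ α⁻¹ + (χ ^ 2) α⁻¹ + χ α⁻¹ * (χ ^ 2) β⁻¹
        + (χ ^ 2) α⁻¹ * χ β⁻¹‖
        ≤ ‖χ β⁻¹ + (χ ^ 2) β⁻¹ + χ α⁻¹ + (χ ^ 2) α⁻¹ + χ α⁻¹ * (χ ^ 2) β⁻¹‖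
          + ‖(χ ^ 2) α⁻¹ * χ β⁻¹‖ := norm_add_le _ _
      _ ≤ (‖χ β⁻¹ + (χ ^ 2) β⁻¹ + χ α⁻¹ + (χ ^ 2) α⁻¹‖
          + ‖χ α⁻¹ * (χ ^ 2) β⁻¹‖) + ‖(χ ^ 2) α⁻¹ * χ β⁻¹‖ := by
          gcongr
          exact norm_add_le _ _
      _ ≤ ((‖χ β⁻¹ + (χ ^ 2) β⁻¹ + χ α⁻¹‖ + ‖(χ ^ 2) α⁻¹‖)
          + ‖χ α⁻¹ * (χ ^ 2) β⁻¹‖) + ‖(χ ^ 2) α⁻¹ * χ β⁻¹‖ := by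
          gcongr
          exact norm_add_le _ _
      _ ≤ (((‖χ β⁻¹ + (χ ^ 2) β⁻¹‖ + ‖χ α⁻¹‖)
          + ‖(χ ^ 2) α⁻¹‖)
          + ‖χ α⁻¹ * (χ ^ 2) β⁻¹‖) + ‖(χ ^ 2) α⁻¹ * χ β⁻¹‖ := by
          gcongr
          exact norm_add_le _ _
      _ ≤ ((((‖χ β⁻¹‖ + ‖(χ ^ 2) β⁻¹‖) + ‖χ α⁻¹‖)
          + ‖(χ ^ 2) α⁻¹‖)
          + ‖χ α⁻¹ * (χ ^ 2) β⁻¹‖) + ‖(χ ^ 2) α⁻¹ * χ β⁻¹‖ := by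
          gcongr
          exact norm_add_le _ _
      _ = 6 := by
          rw [norm_mul, norm_mul, habs1 _ hαi, habs1 _ hβi, habs2 _ hαi, habs2 _ hβi]
          norm_num
  have hB1 : ‖χ α⁻¹ * χ β⁻¹ * jacobiSum χ χ‖ = Real.sqrt p := by
    rw [norm_mul, norm_mul, habs1 _ hαi, habs1 _ hβi, habsJ]
    ring
  have hB2 : ‖(χ ^ 2) α⁻¹ * (χ ^ 2) β⁻¹ * jacobiSum (χ ^ 2) (χ ^ 2)‖
      = Real.sqrt p := by
    rw [norm_mul, norm_mul, habs2 _ hαi, habs2 _ hβi, habsJ2]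
    ring
  have hbound : ‖(p : ℂ) - 2‖ ≤ 6 + 2 * Real.sqrt p := by
    rw [heq]
    calc ‖_ - _ - _‖
        ≤ ‖_ - _‖ + ‖(χ ^ 2) α⁻¹ * (χ ^ 2) β⁻¹
            * jacobiSum (χ ^ 2) (χ ^ 2)‖ := hsub _ _
      _ ≤ (‖_‖ + ‖χ α⁻¹ * χ β⁻¹ * jacobiSum χ χ‖)
          + ‖(χ ^ 2) α⁻¹ * (χ ^ 2) β⁻¹ * jacobiSum (χ ^ 2) (χ ^ 2)‖ := by
          gcongr
          exact hsub _ _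
      _ ≤ (6 + Real.sqrt p) + Real.sqrt p := by
          rw [hB1, hB2]
          gcongr
      _ = 6 + 2 * Real.sqrt p := by ring
  have hre : ((p : ℂ) - 2) = (((p : ℝ) - 2 : ℝ) : ℂ) := by push_cast; ring
  have hpr : (19 : ℝ) ≤ (p : ℝ) := by exact_mod_cast hp19
  rw [hre, Complex.norm_real, Real.norm_eq_abs, abs_of_nonneg (by linarith)] at hbound
  have hs1 : Real.sqrt (p : ℝ) ^ 2 = (p : ℝ) := Real.sq_sqrt (by positivity)
  have hs2 : 0 ≤ Real.sqrt (p : ℝ) := Real.sqrt_nonneg _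
  nlinarith [sq_nonneg (Real.sqrt (p : ℝ) - 4), sq_nonneg (Real.sqrt (p : ℝ) + 2)]

end jac


-- there exist two distinct nonzero cubes
lemma two_cubes (p : ℕ) [hp : Fact p.Prime] (hp2 : p ≠ 2) :
    ∃ w₁ w₂ : ZMod p, w₁ ∈ cubesSet p ∧ w₂ ∈ cubesSet p ∧ w₁ ≠ w₂ ∧ w₁ ≠ 0 ∧ w₂ ≠ 0 := by
  have hp' := hp.out
  have hple := hp'.two_le
  have hunit : ∃ u : (ZMod p)ˣ, ((u : ZMod p)) ^ 3 ≠ 1 := by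
    by_contra hall
    push_neg at hall
    obtain ⟨g, hg⟩ := IsCyclic.exists_generator (α := (ZMod p)ˣ)
    have hcard : orderOf g = p - 1 := by
      rw [orderOf_eq_card_of_forall_mem_zpowers hg, Nat.card_eq_fintype_card, ZMod.card_units p]
    have hg3 : g ^ 3 = 1 := by
      ext
      rw [Units.val_pow_eq_pow_val, hall g, Units.val_one]
    have hdvd : p - 1 ∣ 3 := by rw [← hcard]; exact orderOf_dvd_of_pow_eq_one hg3
    have hle : p - 1 ≤ 3 := Nat.le_of_dvd (by norm_num) hdvd
    have hp4 : p = 3 ∨ p = 4 := by omega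
    rcases hp4 with rfl | rfl
    · norm_num at hdvd
    · norm_num at hp'
  obtain ⟨u, hu⟩ := hunit
  refine ⟨(u : ZMod p) ^ 3, 1, ⟨u, rfl⟩, one_mem_cubesSet p, hu, ?_, one_ne_zero⟩
  rw [← Units.val_pow_eq_pow_val]
  exact Units.ne_zero _

theorem core_nonzero (p : ℕ) [hp : Fact p.Prime] (hp2 : p ≠ 2) (hp7 : p ≠ 7) (hp13 : p ≠ 13) :
    ∀ (B : List (ZMod p)), (∀ x ∈ B, x ≠ 0) → (B = [] ∨ cval p ≤ B.length) →
      IsWeightedZeroSum (cubesSet p) B := by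
  have hp' := hp.out
  suffices H : ∀ (N : ℕ) (B : List (ZMod p)), B.length = N → (∀ x ∈ B, x ≠ 0) →
      (B = [] ∨ cval p ≤ B.length) → IsWeightedZeroSum (cubesSet p) B by
    intro B h1 h2; exact H B.length B rfl h1 h2
  intro N
  induction N using Nat.strong_induction_on with
  | _ N ih =>
    intro B hlen hnz hc
    rcases hc with rfl | hc
    · exact ⟨[], by simp, by simp, by simp⟩
    have hcval2 : 2 ≤ cval p := by unfold cval; split <;> omega
    by_cases hstep : cval p < B.length
    · -- inductive step: merge the first two entries
      match B, hnz, hlen, hc, hstep with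
      | [], _, _, _, hstep => exact absurd hstep (by simp)
      | [x], _, _, _, hstep =>
        exact absurd hstep (by simp only [List.length_cons, List.length_nil]; omega)
      | x :: y :: t, hnz, hlen, hc, hstep =>
        have hx : x ≠ 0 := hnz x (by simp)
        have hy : y ≠ 0 := hnz y (by simp)
        obtain ⟨w₁, w₂, hw₁c, hw₂c, hne, h10, h20⟩ := two_cubes p hp2
        have hxy : ∃ w, w ∈ cubesSet p ∧ w ≠ 0 ∧ x + w * y ≠ 0 := by
          by_cases h1 : x + w₁ * y = 0
          · refine ⟨w₂, hw₂c, h20, ?_⟩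
            intro h2
            apply hne
            have hxx : w₁ * y = w₂ * y := by linear_combination h1 - h2
            exact mul_right_cancel₀ hy hxx
          · exact ⟨w₁, hw₁c, h10, h1⟩
        obtain ⟨w, hwc, hw0, hxwy⟩ := hxy
        have hlt : ((x + w * y) :: t).length < N := by
          simp only [List.length_cons] at hlen ⊢; omega
        obtain ⟨al, hal, ham, has⟩ := ih (((x + w * y) :: t).length) (by omega)
          ((x + w * y) :: t) rfl
          (by
            intro z hz
            rcases List.mem_cons.mp hz with rfl | hz
            · exact hxwy
            · exact hnz z (by simp [hz]))
          (by
            right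
            simp only [List.length_cons] at hstep ⊢
            omega)
        match al, hal with
        | aw :: as, hal =>
          refine ⟨aw :: (aw * w) :: as, by simp only [List.length_cons] at hal ⊢; omega, ?_, ?_⟩
          · intro s hs
            simp only [List.mem_cons] at hs
            rcases hs with h | h | h
            · exact h ▸ ham aw (by simp)
            · exact h ▸ mul_mem_cubesSet (ham aw (by simp)) hwc
            · exact ham s (by simp [h])
          · simp only [List.zipWith_cons_cons, List.sum_cons] at has ⊢
            linear_combination has
    · -- base case: length = cval p
      have hbase : B.length = cval p := by omega
      by_cases hmod : p % 3 = 1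
      · rw [show cval p = 3 by unfold cval; rw [if_pos hmod]] at hbase
        match B, hbase, hnz with
        | [x, y, z], _, hnz =>
          have hx : x ≠ 0 := hnz x (by simp)
          have hy : y ≠ 0 := hnz y (by simp)
          have hz : z ≠ 0 := hnz z (by simp)
          have hzne : (-z) ≠ 0 := neg_ne_zero.mpr hz
          have hα : x * (-z)⁻¹ ≠ 0 := mul_ne_zero hx (inv_ne_zero hzne)
          have hβ : y * (-z)⁻¹ ≠ 0 := mul_ne_zero hy (inv_ne_zero hzne)
          obtain ⟨xu, yu, hxy⟩ := cube_pair_solvable p hmod hp7 hp13 hα hβ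
          refine ⟨[(xu : ZMod p) ^ 3, (yu : ZMod p) ^ 3, 1], by simp, ?_, ?_⟩
          · intro t ht
            simp only [List.mem_cons, List.not_mem_nil, or_false] at ht
            rcases ht with rfl | rfl | rfl
            · exact ⟨xu, rfl⟩
            · exact ⟨yu, rfl⟩
            · exact one_mem_cubesSet p
          · simp only [List.zipWith_cons_cons, List.zipWith_nil_right,
              List.zipWith_nil_left, List.sum_cons, List.sum_nil]
            field_simp at hxy
            linear_combination -hxy
      · rw [show cval p = 2 by unfold cval; rw [if_neg hmod]] at hbase
        match B, hbase, hnz with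
        | [x, y], _, hnz =>
          have hx : x ≠ 0 := hnz x (by simp)
          have hy : y ≠ 0 := hnz y (by simp)
          have hmem : -(x * y⁻¹) ∈ cubesSet p := by
            apply cube_surj p hp2 hmod
            exact neg_ne_zero.mpr (mul_ne_zero hx (inv_ne_zero hy))
          refine ⟨[1, -(x * y⁻¹)], by simp, ?_, ?_⟩
          · intro t ht
            simp only [List.mem_cons, List.not_mem_nil, or_false] at ht
            rcases ht with rfl | rfl
            · exact one_mem_cubesSet p
            · exact hmem
          · simp only [List.zipWith_cons_cons, List.zipWith_nil_right,
              List.zipWith_nil_left, List.sum_cons, List.sum_nil]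
            field_simp
            ring

theorem local_wzs (p : ℕ) [hp : Fact p.Prime] (hp2 : p ≠ 2) (hp7 : p ≠ 7) (hp13 : p ≠ 13)
    (B : List (ZMod p))
    (h : B.countP (fun x => x ≠ 0) = 0 ∨ cval p ≤ B.countP (fun x => x ≠ 0)) :
    IsWeightedZeroSum (cubesSet p) B := by
  apply isWZS_of_filter
  apply core_nonzero p hp2 hp7 hp13
  · intro x hx
    exact of_decide_eq_true (List.mem_filter.mp hx).2
  · rw [List.countP_eq_length_filter] at h
    rcases h with h | h
    · left; exact List.eq_nil_of_length_eq_zero h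
    · right; exact h

/-! ### CRT gluing -/

section CRT

variable {a b : ℕ}

lemma crt_pair_injective (ha : a ≠ 0) (hb : b ≠ 0) (h : a.Coprime b) :
    Function.Injective (fun z : ZMod (a * b) =>
      ((ZMod.castHom (dvd_mul_right a b) (ZMod a)) z,
        (ZMod.castHom (dvd_mul_left b a) (ZMod b)) z)) := by
  haveI : NeZero a := ⟨ha⟩
  haveI : NeZero b := ⟨hb⟩
  haveI : NeZero (a * b) := ⟨mul_ne_zero ha hb⟩
  intro z z' hzz
  simp only [Prod.mk.injEq] at hzz
  have key : ∀ (c : ℕ) (hc : c ∣ a * b) [NeZero c] (w : ZMod (a * b)),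
      (ZMod.castHom hc (ZMod c)) w = ((w.val : ℕ) : ZMod c) := by
    intro c hc _ w
    rw [ZMod.castHom_apply, ← ZMod.natCast_val]
  have da : a ∣ (z - z').val := by
    rw [← ZMod.natCast_eq_zero_iff, ← key a (dvd_mul_right a b)]
    rw [map_sub, hzz.1, sub_self]
  have db : b ∣ (z - z').val := by
    rw [← ZMod.natCast_eq_zero_iff, ← key b (dvd_mul_left b a)]
    rw [map_sub, hzz.2, sub_self]
  have dab : a * b ∣ (z - z').val := h.mul_dvd_of_dvd_of_dvd da db
  have : ((z - z').val : ZMod (a * b)) = 0 := (ZMod.natCast_eq_zero_iff _ _).mpr dab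
  rw [ZMod.natCast_zmod_val] at this
  exact sub_eq_zero.mp this

lemma crt_pair_surjective (ha : a ≠ 0) (hb : b ≠ 0) (h : a.Coprime b) :
    Function.Surjective (fun z : ZMod (a * b) =>
      ((ZMod.castHom (dvd_mul_right a b) (ZMod a)) z,
        (ZMod.castHom (dvd_mul_left b a) (ZMod b)) z)) := by
  haveI : NeZero a := ⟨ha⟩
  haveI : NeZero b := ⟨hb⟩
  haveI : NeZero (a * b) := ⟨mul_ne_zero ha hb⟩
  have hcard : Fintype.card (ZMod (a * b)) = Fintype.card (ZMod a × ZMod b) := by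
    rw [ZMod.card, Fintype.card_prod, ZMod.card, ZMod.card]
  exact ((Fintype.bijective_iff_injective_and_card _).mpr
    ⟨crt_pair_injective ha hb h, hcard⟩).surjective

lemma cubes_lift (ha : a ≠ 0) (hb : b ≠ 0) (h : a.Coprime b) {x : ZMod a} {y : ZMod b}
    (hx : x ∈ cubesSet a) (hy : y ∈ cubesSet b) :
    ∃ z : ZMod (a * b), z ∈ cubesSet (a * b) ∧
      (ZMod.castHom (dvd_mul_right a b) (ZMod a)) z = x ∧
      (ZMod.castHom (dvd_mul_left b a) (ZMod b)) z = y := by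
  obtain ⟨u, hu⟩ := hx
  obtain ⟨v, hv⟩ := hy
  obtain ⟨s, hs⟩ := crt_pair_surjective ha hb h ((u : ZMod a), (v : ZMod b))
  obtain ⟨s', hs'⟩ := crt_pair_surjective ha hb h (((u⁻¹ : (ZMod a)ˣ) : ZMod a),
    ((v⁻¹ : (ZMod b)ˣ) : ZMod b))
  simp only [Prod.mk.injEq] at hs hs'
  have h1 : s * s' = 1 := by
    apply crt_pair_injective ha hb h
    simp only [map_mul, map_one, Prod.mk.injEq, hs.1, hs.2, hs'.1, hs'.2]
    constructor
    · rw [← Units.val_mul, mul_inv_cancel, Units.val_one]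
    · rw [← Units.val_mul, mul_inv_cancel, Units.val_one]
  obtain ⟨w, hw⟩ := IsUnit.of_mul_eq_one s' h1
  refine ⟨s ^ 3, ⟨w, by rw [hw]⟩, ?_, ?_⟩
  · rw [map_pow, hs.1, hu]
  · rw [map_pow, hs.2, hv]

lemma zip_sum_hom {R S : Type*} [CommRing R] [CommRing S] (f : R →+* S) :
    ∀ (w B : List R),
      f ((List.zipWith (· * ·) w B).sum) =
        (List.zipWith (· * ·) (w.map f) (B.map f)).sum := by
  intro w
  induction w with
  | nil => intro B; simp
  | cons x w ihw =>
    intro B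
    cases B with
    | nil => simp
    | cons y B => simp [ihw B]

theorem glue (ha : a ≠ 0) (hb : b ≠ 0) (h : a.Coprime b) (B : List (ZMod (a * b)))
    (hA : IsWeightedZeroSum (cubesSet a) (B.map (ZMod.castHom (dvd_mul_right a b) (ZMod a))))
    (hB : IsWeightedZeroSum (cubesSet b) (B.map (ZMod.castHom (dvd_mul_left b a) (ZMod b)))) :
    IsWeightedZeroSum (cubesSet (a * b)) B := by
  obtain ⟨wa, hla, hma, hsa⟩ := hA
  obtain ⟨wb, hlb, hmb, hsb⟩ := hB
  rw [List.length_map] at hla hlb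
  have haux : ∀ (B : List (ZMod (a * b))) (wa : List (ZMod a)) (wb : List (ZMod b)),
      wa.length = B.length → wb.length = B.length →
      (∀ x ∈ wa, x ∈ cubesSet a) → (∀ x ∈ wb, x ∈ cubesSet b) →
      ∃ w : List (ZMod (a * b)), w.length = B.length ∧ (∀ x ∈ w, x ∈ cubesSet (a * b)) ∧
        w.map (ZMod.castHom (dvd_mul_right a b) (ZMod a)) = wa ∧
        w.map (ZMod.castHom (dvd_mul_left b a) (ZMod b)) = wb := by
    intro B
    induction B with
    | nil =>
      intro wa wb hwa hwb _ _
      rw [List.length_nil, List.length_eq_zero_iff] at hwa hwb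
      subst hwa; subst hwb
      exact ⟨[], by simp, by simp, by simp, by simp⟩
    | cons x B ihB =>
      intro wa wb hwa hwb hmwa hmwb
      match wa, wb, hwa, hwb with
      | p :: wa', q :: wb', hwa, hwb =>
        obtain ⟨z, hz, hz1, hz2⟩ := cubes_lift ha hb h (hmwa p (by simp)) (hmwb q (by simp))
        obtain ⟨w', h1, h2, h3, h4⟩ := ihB wa' wb' (by simpa using hwa) (by simpa using hwb)
          (fun t ht => hmwa t (by simp [ht])) (fun t ht => hmwb t (by simp [ht]))
        refine ⟨z :: w', by simpa using h1, ?_, by simp [hz1, h3], by simp [hz2, h4]⟩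
        intro t ht
        rcases List.mem_cons.mp ht with rfl | ht
        · exact hz
        · exact h2 t ht
  obtain ⟨w, h1, h2, h3, h4⟩ := haux B wa wb hla hlb hma hmb
  refine ⟨w, h1, h2, ?_⟩
  apply crt_pair_injective ha hb h
  simp only [map_zero, Prod.mk.injEq]
  constructor
  · rw [zip_sum_hom, h3, hsa]
  · rw [zip_sum_hom, h4, hsb]

end CRT

/-! ### The multi-prime lemma -/

lemma countP_map_cast {n q : ℕ} (h : q ∣ n) (B : List (ZMod n)) :
    (B.map (ZMod.castHom h (ZMod q))).countP (fun x => x ≠ 0) =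
      B.countP (fun x => (ZMod.cast x : ZMod q) ≠ 0) := by
  rw [List.countP_map]
  congr 1

lemma zmod_cast_cast {n m r : ℕ} (hm : m ∣ n) (hr : r ∣ m) (x : ZMod n) :
    (ZMod.cast ((ZMod.castHom hm (ZMod m)) x) : ZMod r) = (ZMod.cast x : ZMod r) := by
  have hcomp := ZMod.castHom_comp hr hm
  calc (ZMod.cast ((ZMod.castHom hm (ZMod m)) x) : ZMod r)
      = (ZMod.castHom hr (ZMod r)) ((ZMod.castHom hm (ZMod m)) x) :=
        (ZMod.castHom_apply _).symm
    _ = ((ZMod.castHom hr (ZMod r)).comp (ZMod.castHom hm (ZMod m))) x := rfl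
    _ = (ZMod.castHom (hr.trans hm) (ZMod r)) x := by rw [hcomp]
    _ = (ZMod.cast x : ZMod r) := ZMod.castHom_apply x

theorem multi : ∀ (n : ℕ), Squarefree n → ¬ 2 ∣ n → ¬ 7 ∣ n → ¬ 13 ∣ n →
    ∀ B : List (ZMod n),
      (∀ p ∈ n.primeFactors,
        B.countP (fun x => (ZMod.cast x : ZMod p) ≠ 0) = 0 ∨
        cval p ≤ B.countP (fun x => (ZMod.cast x : ZMod p) ≠ 0)) →
      IsWeightedZeroSum (cubesSet n) B := by
  intro n
  induction n using Nat.strong_induction_on with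
  | _ n ih =>
    intro hsf h2 h7 h13 B hB
    have hn0 : n ≠ 0 := hsf.ne_zero
    by_cases hn1 : n = 1
    · subst hn1
      refine ⟨List.replicate B.length 1, by simp, ?_, Subsingleton.elim _ _⟩
      intro w hw
      rw [List.eq_of_mem_replicate hw]
      exact one_mem_cubesSet 1
    by_cases hnp : n.Prime
    · haveI : Fact n.Prime := ⟨hnp⟩
      have hcond := hB n (by rw [Nat.mem_primeFactors]; exact ⟨hnp, dvd_rfl, hn0⟩)
      apply local_wzs n (by rintro rfl; exact h2 dvd_rfl) (by rintro rfl; exact h7 dvd_rfl)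
        (by rintro rfl; exact h13 dvd_rfl) B
      simpa only [ZMod.cast_id] using hcond
    · -- composite case
      obtain ⟨q, m, rfl, hq, hmlt, hcop⟩ :
          ∃ q m, n = q * m ∧ q.Prime ∧ m < q * m ∧ q.Coprime m := by
        have hqp : n.minFac.Prime := Nat.minFac_prime hn1
        refine ⟨n.minFac, n / n.minFac, (Nat.mul_div_cancel' n.minFac_dvd).symm, hqp, ?_, ?_⟩
        · rw [Nat.mul_div_cancel' n.minFac_dvd]
          exact Nat.div_lt_self (Nat.pos_of_ne_zero hn0) hqp.one_lt
        · rw [hqp.coprime_iff_not_dvd]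
          intro hd
          have hdd : n.minFac * n.minFac ∣ n := by
            calc n.minFac * n.minFac ∣ n.minFac * (n / n.minFac) :=
              mul_dvd_mul_left _ hd
            _ = n := Nat.mul_div_cancel' n.minFac_dvd
          exact hqp.ne_one (Nat.isUnit_iff.mp (hsf n.minFac hdd))
      have hq0 : q ≠ 0 := hq.ne_zero
      have hm0 : m ≠ 0 := by rintro rfl; rw [mul_zero] at hn0; exact hn0 rfl
      haveI : Fact q.Prime := ⟨hq⟩
      have hmdvd : m ∣ q * m := dvd_mul_left m q
      apply glue hq0 hm0 hcop
      · -- the prime part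
        apply local_wzs q (by rintro rfl; exact h2 (dvd_mul_right 2 m))
          (by rintro rfl; exact h7 (dvd_mul_right 7 m))
          (by rintro rfl; exact h13 (dvd_mul_right 13 m))
        rw [countP_map_cast]
        exact hB q (by rw [Nat.mem_primeFactors]; exact ⟨hq, dvd_mul_right q m, hn0⟩)
      · -- the rest, by induction
        apply ih m hmlt (hsf.squarefree_of_dvd hmdvd)
          (fun hd => h2 (hd.trans hmdvd)) (fun hd => h7 (hd.trans hmdvd))
          (fun hd => h13 (hd.trans hmdvd))
        intro r hr
        have hrd : r ∣ m := Nat.dvd_of_mem_primeFactors hr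
        have hcount : (B.map (ZMod.castHom hmdvd (ZMod m))).countP
            (fun x => (ZMod.cast x : ZMod r) ≠ 0) =
            B.countP (fun x => (ZMod.cast x : ZMod r) ≠ 0) := by
          rw [List.countP_map]
          congr 1
          funext x
          simp only [Function.comp, ne_eq, decide_not]
          rw [zmod_cast_cast hmdvd hrd]
        rw [hcount]
        exact hB r (Nat.primeFactors_mono hmdvd hn0 hr)

/-! ### Bookkeeping -/

lemma card_primeFactors_eq_length {m : ℕ} (hm : Squarefree m) :
    m.primeFactors.card = m.primeFactorsList.length :=
  List.toFinset_card_of_nodup ((Nat.squarefree_iff_nodup_primeFactorsList hm.ne_zero).mp hm)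

lemma length_eq_prod (n : ℕ) (hsf : Squarefree n) :
    2 ^ (n / partOne n).primeFactorsList.length * 3 ^ (partOne n).primeFactorsList.length =
      (n.primeFactorsList.map cval).prod := by
  classical
  have hn0 : n ≠ 0 := hsf.ne_zero
  set S := n.primeFactors with hS
  set S1 := S.filter (fun p => p % 3 = 1) with hS1
  set S2 := S.filter (fun p => ¬ p % 3 = 1) with hS2
  have hS1primes : ∀ p ∈ S1, p.Prime := fun p hp =>
    Nat.prime_of_mem_primeFactors (Finset.mem_filter.mp hp).1
  have hS2primes : ∀ p ∈ S2, p.Prime := fun p hp =>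
    Nat.prime_of_mem_primeFactors (Finset.mem_filter.mp hp).1
  have hP1 : partOne n = ∏ p ∈ S1, p := by
    apply Finset.prod_congr rfl
    intro p hp
    have hppf := (Finset.mem_filter.mp hp).1
    have h1 : 0 < n.factorization p :=
      (Nat.prime_of_mem_primeFactors hppf).factorization_pos_of_dvd hn0
        (Nat.dvd_of_mem_primeFactors hppf)
    have h2 : n.factorization p ≤ 1 := hsf.natFactorization_le_one p
    have : n.factorization p = 1 := by omega
    rw [this, pow_one]
  have hprod : (∏ p ∈ S1, p) * (∏ p ∈ S2, p) = n := by
    rw [hS1, hS2, Finset.prod_filter_mul_prod_filter_not]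
    exact Nat.prod_primeFactors_of_squarefree hsf
  have hone : Squarefree (∏ p ∈ S1, p) := by
    apply Squarefree.squarefree_of_dvd _ hsf
    exact ⟨∏ p ∈ S2, p, hprod.symm⟩
  have htwo : Squarefree (∏ p ∈ S2, p) := by
    apply Squarefree.squarefree_of_dvd _ hsf
    exact ⟨∏ p ∈ S1, p, by rw [← hprod]; ring⟩
  have hPF1 : (∏ p ∈ S1, p).primeFactors = S1 := Nat.primeFactors_prod hS1primes
  have hPF2 : (∏ p ∈ S2, p).primeFactors = S2 := Nat.primeFactors_prod hS2primes
  have hdiv : n / partOne n = ∏ p ∈ S2, p := by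
    rw [hP1, ← hprod, Nat.mul_div_cancel_left]
    exact Finset.prod_pos (fun p hp => (hS1primes p hp).pos)
  have hlen1 : (partOne n).primeFactorsList.length = S1.card := by
    rw [hP1, ← card_primeFactors_eq_length hone, hPF1]
  have hlen2 : (n / partOne n).primeFactorsList.length = S2.card := by
    rw [hdiv, ← card_primeFactors_eq_length htwo, hPF2]
  have hassoc : (n.primeFactorsList.map cval).prod = ∏ p ∈ S, cval p := by
    rw [hS]
    exact (List.prod_toFinset cval
      ((Nat.squarefree_iff_nodup_primeFactorsList hn0).mp hsf)).symm
  rw [hassoc, hlen1, hlen2]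
  rw [← Finset.prod_filter_mul_prod_filter_not S (fun p => p % 3 = 1) cval]
  have hv1 : ∏ p ∈ S1, cval p = 3 ^ S1.card := by
    rw [Finset.prod_congr rfl (fun p hp => show cval p = 3 by
      unfold cval; rw [if_pos (Finset.mem_filter.mp hp).2]), Finset.prod_const]
  have hv2 : ∏ p ∈ S2, cval p = 2 ^ S2.card := by
    rw [Finset.prod_congr rfl (fun p hp => show cval p = 2 by
      unfold cval; rw [if_neg (Finset.mem_filter.mp hp).2]), Finset.prod_const]
  rw [← hS1, ← hS2, hv1, hv2]
  ring

/-- For squarefree `n` not divisible by `2`, `7` or `13`, with standard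
decomposition `n = n₁n₂`, every sequence of length `2^{Ω(n₂)} · 3^{Ω(n₁)}` in `Z_n` has
a nonempty consecutive `U(n)³`-weighted zero-sum subsequence, i.e.
`C_{U(n)³}(n) ≤ 2^{Ω(n₂)} · 3^{Ω(n₁)}`. -/
theorem C_cubes_upper_bound_squarefree (n : ℕ) (hsf : Squarefree n)
    (h2 : ¬ 2 ∣ n) (h7 : ¬ 7 ∣ n) (h13 : ¬ 13 ∣ n) :
    ∀ L : List (ZMod n),
      L.length = 2 ^ (n / partOne n).primeFactorsList.length *
          3 ^ (partOne n).primeFactorsList.length →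
      HasConsecWZS {x : ZMod n | ∃ u : (ZMod n)ˣ, (u : ZMod n) ^ 3 = x} L := by
  intro L hL
  rw [length_eq_prod n hsf] at hL
  obtain ⟨l₁, l₂, l₃, hsplit, hne, hgood⟩ :=
    comb_cover cval (fun p x => decide ((ZMod.cast x : ZMod p) ≠ 0))
      n.primeFactorsList.length n.primeFactorsList rfl (fun i _ => cval_pos i) L hL
  refine ⟨l₁, l₂, l₃, hsplit, hne, ?_⟩
  show IsWeightedZeroSum (cubesSet n) l₂
  apply multi n hsf h2 h7 h13
  intro p hp
  rw [Nat.mem_primeFactors] at hp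
  have := hgood p (Nat.mem_primeFactorsList hp.2.2 |>.mpr ⟨hp.1, hp.2.1⟩)
  simpa using this
end

section
/- Let n = p^r where p is an odd prime with p ≠ 3 and p ≠ 7, and r ≥ 1. Let S be a sequence in Z_n such that at least four terms of S are units of Z_n. Then S is a U(n)^3-weighted zero-sum sequence. -/
open Finset Pointwise

lemma aux_dvd {p r : ℕ} (hr : 1 ≤ r) : p ∣ p ^ r := dvd_pow_self p (by omega)

lemma isUnit_of_cast {p r : ℕ} (hp : p.Prime) (hr : 1 ≤ r) (x : ZMod (p ^ r))
    (h : IsUnit (ZMod.castHom (aux_dvd hr) (ZMod p) x)) : IsUnit x := by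
  have hp1 : 1 < p ^ r := Nat.one_lt_pow (by omega) hp.one_lt
  haveI : NeZero (p ^ r) := ⟨by omega⟩
  have hx : x = (x.val : ZMod (p ^ r)) := (ZMod.natCast_zmod_val x).symm
  have hcast : (ZMod.castHom (aux_dvd hr) (ZMod p) x) = (x.val : ZMod p) := by
    conv_lhs => rw [hx]
    simp
  rw [hcast, ZMod.isUnit_iff_coprime] at h
  rw [hx, ZMod.isUnit_iff_coprime]
  exact Nat.Coprime.pow_right r h


lemma card_ker {p r : ℕ} (hp : p.Prime) (hr : 1 ≤ r) :
    Nat.card (ZMod.unitsMap (aux_dvd (p := p) hr)).ker = p ^ (r - 1) := by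
  have hp1 : 1 < p ^ r := Nat.one_lt_pow (by omega) hp.one_lt
  haveI : NeZero (p ^ r) := ⟨by omega⟩
  haveI : NeZero p := ⟨hp.pos.ne'⟩
  set f := ZMod.unitsMap (aux_dvd (p := p) hr)
  have hsurj : Function.Surjective f := ZMod.unitsMap_surjective _
  have h1 : Nat.card (ZMod (p ^ r))ˣ = Nat.card ((ZMod (p^r))ˣ ⧸ f.ker) * Nat.card f.ker :=
    Subgroup.card_eq_card_quotient_mul_card_subgroup _
  have h2 : Nat.card ((ZMod (p^r))ˣ ⧸ f.ker) = Nat.card (ZMod p)ˣ :=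
    Nat.card_congr (QuotientGroup.quotientKerEquivOfSurjective f hsurj).toEquiv
  have h3 : Nat.card (ZMod (p ^ r))ˣ = p ^ (r - 1) * (p - 1) := by
    rw [Nat.card_eq_fintype_card, ZMod.card_units_eq_totient,
      Nat.totient_prime_pow hp (by omega)]
  have h4 : Nat.card (ZMod p)ˣ = p - 1 := by
    rw [Nat.card_eq_fintype_card, ZMod.card_units_eq_totient, Nat.totient_prime hp]
  rw [h2, h4, h3] at h1
  have hppos : 0 < p - 1 := by have := hp.two_le; omega
  exact (Nat.eq_of_mul_eq_mul_left hppos (by rw [mul_comm]; exact h1)).symm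


lemma cube_lift {p r : ℕ} (hp : p.Prime) (h3 : p ≠ 3) (hr : 1 ≤ r) (x : ZMod (p ^ r))
    (h : ∃ d : (ZMod p)ˣ, (d : ZMod p) ^ 3 = ZMod.castHom (aux_dvd hr) (ZMod p) x) :
    ∃ u : (ZMod (p ^ r))ˣ, (u : ZMod (p ^ r)) ^ 3 = x := by
  obtain ⟨d, hd⟩ := h
  have hp1 : 1 < p ^ r := Nat.one_lt_pow (by omega) hp.one_lt
  haveI : NeZero (p ^ r) := ⟨by omega⟩
  have hxu : IsUnit x := isUnit_of_cast hp hr x (hd ▸ (d.isUnit.pow 3))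
  set f := ZMod.unitsMap (aux_dvd (p := p) hr) with hf
  have hfX : f hxu.unit = d ^ 3 := by
    apply Units.ext
    rw [hf, ZMod.unitsMap_def]
    simp only [Units.coe_map, MonoidHom.coe_coe, IsUnit.unit_spec, Units.val_pow_eq_pow_val]
    exact hd.symm
  obtain ⟨D, hD⟩ := ZMod.unitsMap_surjective (aux_dvd (p := p) hr) d
  have hk : (D ^ 3)⁻¹ * hxu.unit ∈ f.ker := by
    rw [MonoidHom.mem_ker, map_mul, map_inv, map_pow, hD, hfX, inv_mul_cancel]
  have hcop : (Nat.card f.ker).Coprime 3 := by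
    rw [hf, card_ker hp hr]
    exact Nat.Coprime.pow_left _ ((Nat.coprime_primes hp (by norm_num)).mpr h3)
  obtain ⟨m, hm⟩ := (powCoprime hcop).surjective ⟨_, hk⟩
  have hm' : (m : (ZMod (p ^ r))ˣ) ^ 3 = (D ^ 3)⁻¹ * hxu.unit := by
    have := congrArg (Subtype.val) hm
    simpa [powCoprime_apply] using this
  refine ⟨D * m, ?_⟩
  have : (D * (m : (ZMod (p ^ r))ˣ)) ^ 3 = hxu.unit := by
    rw [mul_pow, hm']
    group
  rw [← Units.val_pow_eq_pow_val, this, IsUnit.unit_spec]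


lemma cover_modp {p : ℕ} (hp : p.Prime) (h2 : p ≠ 2) (h3 : p ≠ 3) (h7 : p ≠ 7)
    (v1 v2 v3 v4 : (ZMod p)ˣ) (t : ZMod p) :
    ∃ c1 c2 c3 c4 : (ZMod p)ˣ,
      (c1 : ZMod p) ^ 3 * v1 + (c2 : ZMod p) ^ 3 * v2 + (c3 : ZMod p) ^ 3 * v3
        + (c4 : ZMod p) ^ 3 * v4 = t := by
  haveI : Fact p.Prime := ⟨hp⟩
  classical
  have hp5 : 5 ≤ p := by
    by_contra hlt
    push_neg at hlt
    interval_cases p <;> simp_all (config := {decide := true})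
  set C : Finset (ZMod p) := Finset.image (fun d : (ZMod p)ˣ => (d : ZMod p) ^ 3) univ with hC
  have hCne : C.Nonempty := ⟨1, by rw [hC, Finset.mem_image]; exact ⟨1, Finset.mem_univ 1, by simp⟩⟩
  have hcardu : Fintype.card (ZMod p)ˣ = p - 1 := by
    rw [ZMod.card_units_eq_totient, Nat.totient_prime hp]
  have hcard : p + 3 ≤ 4 * C.card := by
    by_cases hdvd3 : 3 ∣ p - 1
    · have h13 : 13 ≤ p := by
        by_contra hlt
        push_neg at hlt
        interval_cases p <;> first | omega | (revert hp; decide)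
      have hfib : Fintype.card (ZMod p)ˣ ≤ 3 * C.card := by
        rw [← Finset.card_univ (α := (ZMod p)ˣ)]
        apply Finset.card_le_mul_card_image
        intro b hb
        rw [Finset.mem_image] at hb
        obtain ⟨d0, -, hd0⟩ := hb
        have hset : Finset.filter (fun a : (ZMod p)ˣ => (a : ZMod p) ^ 3 = b) univ
            = Finset.filter (fun g : (ZMod p)ˣ => g ^ 3 = d0 ^ 3) univ := by
          ext g
          simp only [Finset.mem_filter, Finset.mem_univ, true_and]
          constructor
          · intro hg
            exact Units.ext (by rw [Units.val_pow_eq_pow_val, Units.val_pow_eq_pow_val, hg, ← hd0])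
          · intro hg
            rw [← hd0, ← Units.val_pow_eq_pow_val, hg, Units.val_pow_eq_pow_val]
        show #(Finset.filter (fun a : (ZMod p)ˣ => (a : ZMod p) ^ 3 = b) univ) ≤ 3
        rw [hset]
        exact le_trans
          (card_nthRoots_subgroup_units (Units.coeHom (ZMod p)) (fun _ _ h => Units.ext h) (by norm_num) (d0 ^ 3))
          (Polynomial.card_nthRoots 3 _)
      omega
    · have hcop : (Nat.card (ZMod p)ˣ).Coprime 3 := by
        rw [Nat.card_eq_fintype_card, hcardu, Nat.coprime_comm]
        exact (Nat.Prime.coprime_iff_not_dvd (by norm_num)).mpr hdvd3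
      have hinj : Function.Injective (fun d : (ZMod p)ˣ => (d : ZMod p) ^ 3) := by
        intro a b hab
        have hab' : a ^ 3 = b ^ 3 := Units.ext (by simpa using hab)
        exact hcop.pow_left_bijective.injective hab'
      have : C.card = p - 1 := by
        rw [hC, Finset.card_image_of_injective _ hinj, Finset.card_univ, hcardu]
      omega
  -- Cauchy-Davenport
  have himg : ∀ v : (ZMod p)ˣ, (C.image (· * (v : ZMod p))).card = C.card := fun v =>
    Finset.card_image_of_injective _ (mul_left_injective₀ (Units.ne_zero v))
  have himgne : ∀ v : (ZMod p)ˣ, (C.image (· * (v : ZMod p))).Nonempty := fun v =>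
    hCne.image _
  have h12 := ZMod.cauchy_davenport hp (himgne v1) (himgne v2)
  have h123 := ZMod.cauchy_davenport hp ((himgne v1).add (himgne v2)) (himgne v3)
  have h1234 := ZMod.cauchy_davenport hp (((himgne v1).add (himgne v2)).add (himgne v3)) (himgne v4)
  rw [himg v1, himg v2] at h12
  rw [himg v3] at h123
  rw [himg v4] at h1234
  have hle := Finset.card_le_univ (C.image (· * (v1 : ZMod p)) + C.image (· * (v2 : ZMod p))
    + C.image (· * (v3 : ZMod p)) + C.image (· * (v4 : ZMod p)))
  rw [ZMod.card] at hle
  have huniv : C.image (· * (v1 : ZMod p)) + C.image (· * (v2 : ZMod p))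
      + C.image (· * (v3 : ZMod p)) + C.image (· * (v4 : ZMod p)) = univ := by
    apply Finset.eq_univ_of_card
    rw [ZMod.card]
    omega
  have ht : t ∈ C.image (· * (v1 : ZMod p)) + C.image (· * (v2 : ZMod p))
      + C.image (· * (v3 : ZMod p)) + C.image (· * (v4 : ZMod p)) := by
    rw [huniv]; exact Finset.mem_univ t
  rw [Finset.mem_add] at ht
  obtain ⟨x, hx, y4, hy4, hxy⟩ := ht
  rw [Finset.mem_add] at hx
  obtain ⟨x', hx', y3, hy3, hxy'⟩ := hx
  rw [Finset.mem_add] at hx'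
  obtain ⟨y1, hy1, y2, hy2, hxy''⟩ := hx'
  simp only [Finset.mem_image, hC, Finset.mem_univ, true_and] at hy1 hy2 hy3 hy4
  obtain ⟨z1, ⟨c1, rfl⟩, rfl⟩ := hy1
  obtain ⟨z2, ⟨c2, rfl⟩, rfl⟩ := hy2
  obtain ⟨z3, ⟨c3, rfl⟩, rfl⟩ := hy3
  obtain ⟨z4, ⟨c4, rfl⟩, rfl⟩ := hy4
  exact ⟨c1, c2, c3, c4, by rw [← hxy, ← hxy', ← hxy'']⟩


lemma cover_ppow {p r : ℕ} (hp : p.Prime) (h2 : p ≠ 2) (h3 : p ≠ 3) (h7 : p ≠ 7)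
    (hr : 1 ≤ r) (u1 u2 u3 u4 : (ZMod (p ^ r))ˣ) (t : ZMod (p ^ r)) :
    ∃ a1 a2 a3 a4 : ZMod (p ^ r),
      (∃ w : (ZMod (p ^ r))ˣ, (w : ZMod (p ^ r)) ^ 3 = a1) ∧
      (∃ w : (ZMod (p ^ r))ˣ, (w : ZMod (p ^ r)) ^ 3 = a2) ∧
      (∃ w : (ZMod (p ^ r))ˣ, (w : ZMod (p ^ r)) ^ 3 = a3) ∧
      (∃ w : (ZMod (p ^ r))ˣ, (w : ZMod (p ^ r)) ^ 3 = a4) ∧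
      a1 * u1 + a2 * u2 + a3 * u3 + a4 * u4 = t := by
  have hp1 : 1 < p ^ r := Nat.one_lt_pow (by omega) hp.one_lt
  haveI : NeZero (p ^ r) := ⟨by omega⟩
  set π := ZMod.castHom (aux_dvd (p := p) hr) (ZMod p) with hπ
  set f := ZMod.unitsMap (aux_dvd (p := p) hr) with hf
  have hπu : ∀ u : (ZMod (p ^ r))ˣ, π (u : ZMod (p ^ r)) = ((f u : (ZMod p)ˣ) : ZMod p) := by
    intro u
    rw [hf, ZMod.unitsMap_def, Units.coe_map]
    rfl
  obtain ⟨c1, c2, c3, c4, hcov⟩ := cover_modp hp h2 h3 h7 (f u1) (f u2) (f u3) (f u4) (π t)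
  obtain ⟨D2, hD2⟩ := ZMod.unitsMap_surjective (aux_dvd (p := p) hr) c2
  obtain ⟨D3, hD3⟩ := ZMod.unitsMap_surjective (aux_dvd (p := p) hr) c3
  obtain ⟨D4, hD4⟩ := ZMod.unitsMap_surjective (aux_dvd (p := p) hr) c4
  set a2 : ZMod (p ^ r) := (D2 : ZMod (p ^ r)) ^ 3 with ha2
  set a3 : ZMod (p ^ r) := (D3 : ZMod (p ^ r)) ^ 3 with ha3
  set a4 : ZMod (p ^ r) := (D4 : ZMod (p ^ r)) ^ 3 with ha4
  set a1 : ZMod (p ^ r) :=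
    ((u1⁻¹ : (ZMod (p ^ r))ˣ) : ZMod (p ^ r)) * (t - a2 * u2 - a3 * u3 - a4 * u4) with ha1
  have hπa2 : π a2 = (c2 : ZMod p) ^ 3 := by rw [ha2, map_pow, hπu, hD2]
  have hπa3 : π a3 = (c3 : ZMod p) ^ 3 := by rw [ha3, map_pow, hπu, hD3]
  have hπa4 : π a4 = (c4 : ZMod p) ^ 3 := by rw [ha4, map_pow, hπu, hD4]
  have hπa1 : π a1 = (c1 : ZMod p) ^ 3 := by
    rw [ha1, map_mul, map_sub, map_sub, map_sub, map_mul, map_mul, map_mul,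
      hπa2, hπa3, hπa4, hπu, hπu, hπu, hπu]
    have hrest : π t - (c2 : ZMod p) ^ 3 * (f u2 : (ZMod p)ˣ) - (c3 : ZMod p) ^ 3 * (f u3 : (ZMod p)ˣ)
        - (c4 : ZMod p) ^ 3 * (f u4 : (ZMod p)ˣ) = (c1 : ZMod p) ^ 3 * (f u1 : (ZMod p)ˣ) := by
      linear_combination -hcov
    rw [map_inv, hrest]
    rw [mul_comm ((c1 : ZMod p) ^ 3)]
    rw [← mul_assoc]
    norm_cast
    rw [inv_mul_cancel, one_mul]
  refine ⟨a1, a2, a3, a4, cube_lift hp h3 hr a1 ⟨c1, hπa1.symm⟩, ⟨D2, ha2.symm⟩,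
    ⟨D3, ha3.symm⟩, ⟨D4, ha4.symm⟩, ?_⟩
  have h1 : ((u1⁻¹ : (ZMod (p ^ r))ˣ) : ZMod (p ^ r)) * (u1 : ZMod (p ^ r)) = 1 := by
    rw [← Units.val_mul, inv_mul_cancel, Units.val_one]
  rw [ha1]
  linear_combination (t - a2 * (u2 : ZMod (p ^ r)) - a3 * (u3 : ZMod (p ^ r))
    - a4 * (u4 : ZMod (p ^ r))) * h1


lemma interleave {n : ℕ} (A : Set (ZMod n)) (h1 : (1 : ZMod n) ∈ A) :
    ∀ {T S : List (ZMod n)}, T.Sublist S → ∀ b : List (ZMod n), b.length = T.length →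
      (∀ w ∈ b, w ∈ A) →
      ∃ a : List (ZMod n), a.length = S.length ∧ (∀ w ∈ a, w ∈ A) ∧
        (List.zipWith (· * ·) a S).sum = (List.zipWith (· * ·) b T).sum + S.sum - T.sum := by
  intro T S h
  induction h with
  | slnil =>
      intro b hb _
      refine ⟨[], rfl, by simp, by simp⟩
  | cons x h ih =>
      intro b hb hbA
      obtain ⟨a, ha1, ha2, ha3⟩ := ih b hb hbA
      refine ⟨1 :: a, by simp [ha1], ?_, ?_⟩
      · intro w hw
        rcases List.mem_cons.mp hw with rfl | hw
        · exact h1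
        · exact ha2 w hw
      · simp only [List.zipWith_cons_cons, List.sum_cons, ha3]
        ring
  | cons_cons x h ih =>
      intro b hb hbA
      cases b with
      | nil => simp at hb
      | cons b0 b =>
        obtain ⟨a, ha1, ha2, ha3⟩ :=
          ih b (by simpa using hb) (fun w hw => hbA w (List.mem_cons_of_mem _ hw))
        refine ⟨b0 :: a, by simp [ha1], ?_, ?_⟩
        · intro w hw
          rcases List.mem_cons.mp hw with rfl | hw
          · exact hbA w List.mem_cons_self
          · exact ha2 w hw
        · simp only [List.zipWith_cons_cons, List.sum_cons, ha3]
          ring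

/-- Let `n = p^r` with `p` an odd prime, `p ≠ 3, 7`, `r ≥ 1`. Any sequence
in `Z_n` with at least four unit terms is a `U(n)³`-weighted zero-sum sequence. -/
theorem cubes_wzs_of_four_units (p r : ℕ) (hp : p.Prime) (hodd : p ≠ 2)
    (h3 : p ≠ 3) (h7 : p ≠ 7) (hr : 1 ≤ r) (S : List (ZMod (p ^ r)))
    (hfour : ∃ T : List (ZMod (p ^ r)), T.Sublist S ∧ T.length = 4 ∧ ∀ x ∈ T, IsUnit x) :
    IsWeightedZeroSum
      {x : ZMod (p ^ r) | ∃ u : (ZMod (p ^ r))ˣ, (u : ZMod (p ^ r)) ^ 3 = x} S := by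
  obtain ⟨T, hsub, hlen, hunits⟩ := hfour
  set A : Set (ZMod (p ^ r)) := {x : ZMod (p ^ r) | ∃ u : (ZMod (p ^ r))ˣ, (u : ZMod (p ^ r)) ^ 3 = x} with hA
  have h1A : (1 : ZMod (p ^ r)) ∈ A := ⟨1, by simp⟩
  match T, hlen with
  | [x1, x2, x3, x4], _ =>
    have hu1 : IsUnit x1 := hunits x1 (by simp)
    have hu2 : IsUnit x2 := hunits x2 (by simp)
    have hu3 : IsUnit x3 := hunits x3 (by simp)
    have hu4 : IsUnit x4 := hunits x4 (by simp)
    obtain ⟨a1, a2, a3, a4, hc1, hc2, hc3, hc4, hsum⟩ :=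
      cover_ppow hp hodd h3 h7 hr hu1.unit hu2.unit hu3.unit hu4.unit
        ((x1 + x2 + x3 + x4) - S.sum)
    rw [hu1.unit_spec, hu2.unit_spec, hu3.unit_spec, hu4.unit_spec] at hsum
    obtain ⟨a, hlenS, hmem, hs⟩ := interleave A h1A hsub [a1, a2, a3, a4] (by simp)
      (by
        intro w hw
        simp only [List.mem_cons, List.not_mem_nil, or_false] at hw
        rcases hw with rfl | rfl | rfl | rfl
        exacts [hc1, hc2, hc3, hc4])
    refine ⟨a, hlenS, hmem, ?_⟩
    rw [hs]
    simp only [List.zipWith_cons_cons, List.zipWith_nil_right, List.sum_cons,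
      List.sum_nil, List.sum_cons]
    linear_combination hsum
end
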